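/- arXiv:2404.00713 — 6 statements merged into one kernel-verified Lean document; each statement's English description precedes it below -/
import Mathlib

section
/- Let f : ℝⁿ → ℝ ∪ {+∞} be proper, lower semicontinuous, and signed permutation invariant, let λ > 0, and let x ∈ ℝⁿ_↓ be such that prox_{λf}(x) is nonempty. Then: (a) there exists u ∈ prox_{λf}(x) with u ∈ ℝⁿ_↓ (i.e., u₁ ≥ u₂ ≥ … ≥ uₙ ≥ 0); (b) if moreover every entry of x is strictly positive, then prox_{λf}(x) ⊆ ℝⁿ₊. -/
/-- A signed permutation matrix: exactly one nonzero entry in each row and each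
column, that entry being `±1`. -/
def IsSignedPerm {n : ℕ} (P : Matrix (Fin n) (Fin n) ℝ) : Prop :=
  ∃ (σ : Equiv.Perm (Fin n)) (ε : Fin n → ℝ),
    (∀ i, ε i = 1 ∨ ε i = -1) ∧ ∀ i j, P i j = if j = σ i then ε i else 0

/-- The proximity operator `prox_{λ f}(z)`: the set of global minimizers of
`(1/(2λ)) ‖u - z‖₂² + f(u)` over `u ∈ ℝⁿ`. -/
noncomputable def proxSetE {n : ℕ} (lam : ℝ) (f : (Fin n → ℝ) → EReal) (z : Fin n → ℝ) :
    Set (Fin n → ℝ) :=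
  {u | ∀ v : Fin n → ℝ,
    ((1 / (2 * lam) * ∑ i, (u i - z i) ^ 2 : ℝ) : EReal) + f u ≤
      ((1 / (2 * lam) * ∑ i, (v i - z i) ^ 2 : ℝ) : EReal) + f v}

lemma signedPerm_apply {n : ℕ} (σ : Equiv.Perm (Fin n)) (ε : Fin n → ℝ)
    (hε : ∀ i, ε i = 1 ∨ ε i = -1) (u : Fin n → ℝ) :
    ∃ P : Matrix (Fin n) (Fin n) ℝ, IsSignedPerm P ∧
      P.mulVec u = fun i => ε i * u (σ i) := by
  classical
  refine ⟨fun i j => if j = σ i then ε i else 0, ⟨σ, ε, hε, fun i j => rfl⟩, ?_⟩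
  funext i
  simp only [Matrix.mulVec, dotProduct]
  rw [Finset.sum_eq_single (σ i)]
  · simp
  · intro j _ hj; simp [hj]
  · intro h; exact absurd (Finset.mem_univ _) h

lemma sum_sq_expand {n : ℕ} (a b : Fin n → ℝ) :
    ∑ i, (a i - b i) ^ 2 =
      ∑ i, (a i) ^ 2 - 2 * ∑ i, a i * b i + ∑ i, (b i) ^ 2 := by
  rw [Finset.mul_sum, ← Finset.sum_sub_distrib, ← Finset.sum_add_distrib]
  exact Finset.sum_congr rfl fun i _ => by ring

theorem stmt_2 {n : ℕ} (f : (Fin n → ℝ) → EReal)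
    (hproper : ∃ x, f x ≠ ⊤) (hnobot : ∀ x, f x ≠ ⊥)
    (hlsc : LowerSemicontinuous f)
    (hinv : ∀ P : Matrix (Fin n) (Fin n) ℝ, IsSignedPerm P → ∀ x, f (P.mulVec x) = f x)
    (lam : ℝ) (hlam : 0 < lam)
    (x : Fin n → ℝ) (hdesc : ∀ i j : Fin n, i ≤ j → x j ≤ x i) (hnonneg : ∀ i, 0 ≤ x i)
    (hne : (proxSetE lam f x).Nonempty) :
    (∃ u ∈ proxSetE lam f x, (∀ i j : Fin n, i ≤ j → u j ≤ u i) ∧ ∀ i, 0 ≤ u i) ∧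
    ((∀ i, 0 < x i) → ∀ u ∈ proxSetE lam f x, ∀ i, 0 ≤ u i) := by
  classical
  have hcpos : (0:ℝ) < 1 / (2 * lam) := by positivity
  -- any element of the prox set has finite f-value
  have hfin : ∀ u ∈ proxSetE lam f x, ∃ r : ℝ, f u = (r : EReal) := by
    intro u hu
    obtain ⟨x₀, hx₀⟩ := hproper
    have h := hu x₀
    have htop : f u ≠ ⊤ := by
      intro hT
      rw [hT] at h
      have hlhs : ((1 / (2 * lam) * ∑ i, (u i - x i) ^ 2 : ℝ) : EReal) + ⊤ = ⊤ := by
        exact EReal.add_top_of_ne_bot (EReal.coe_ne_bot _)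
      rw [hlhs, top_le_iff] at h
      lift f x₀ to ℝ using ⟨hx₀, hnobot x₀⟩ with s hs
      rw [← EReal.coe_add] at h
      exact EReal.coe_ne_top _ h
    lift f u to ℝ using ⟨htop, hnobot u⟩ with r hr
    exact ⟨r, rfl⟩
  constructor
  · -- part (a)
    obtain ⟨u, hu⟩ := hne
    set w : Fin n → ℝ := fun i => |u i| with hw
    set σ : Equiv.Perm (Fin n) := Tuple.sort (fun i => -(w i)) with hσ
    set u' : Fin n → ℝ := fun i => w (σ i) with hu'
    have hmono : Monotone ((fun i => -(w i)) ∘ σ) := Tuple.monotone_sort _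
    have hdesc' : ∀ i j : Fin n, i ≤ j → u' j ≤ u' i := by
      intro i j hij
      have := hmono hij
      simp only [Function.comp_apply, neg_le_neg_iff] at this
      exact this
    have hnn' : ∀ i, 0 ≤ u' i := fun i => abs_nonneg _
    -- u' is a signed permutation of u
    set ε : Fin n → ℝ := fun i => if u (σ i) < 0 then -1 else 1 with hε
    have hεpm : ∀ i, ε i = 1 ∨ ε i = -1 := by
      intro i; by_cases h : u (σ i) < 0 <;> simp [hε, h]
    obtain ⟨P, hP, hPu⟩ := signedPerm_apply σ ε hεpm u
    have hPu' : P.mulVec u = u' := by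
      rw [hPu]; funext i
      by_cases h : u (σ i) < 0
      · simp [hε, hu', hw, h, abs_of_neg h]
      · simp [hε, hu', hw, h, abs_of_nonneg (not_lt.mp h)]
    have hfu' : f u' = f u := by rw [← hPu']; exact hinv P hP u
    -- rearrangement inequality
    have hmonovary : Monovary (fun i => w (σ i)) x := by
      intro i j hxij
      by_cases hij : i ≤ j
      · exact absurd hxij (not_lt.mpr (hdesc i j hij))
      · exact hdesc' j i (le_of_not_ge hij)
    have hrearr : ∑ i, w (σ i) * x (σ i) ≤ ∑ i, w (σ i) * x i :=
      hmonovary.sum_mul_comp_perm_le_sum_mul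
    have hsum1 : ∑ i, w (σ i) * x (σ i) = ∑ i, w i * x i :=
      Equiv.sum_comp σ (fun i => w i * x i)
    have hcross : ∑ i, u i * x i ≤ ∑ i, u' i * x i := by
      have h1 : ∑ i, u i * x i ≤ ∑ i, w i * x i := by
        apply Finset.sum_le_sum
        intro i _
        exact mul_le_mul_of_nonneg_right (le_abs_self _) (hnonneg i)
      calc ∑ i, u i * x i ≤ ∑ i, w i * x i := h1
        _ = ∑ i, w (σ i) * x (σ i) := hsum1.symm
        _ ≤ ∑ i, w (σ i) * x i := hrearr
    have hsq : ∑ i, (u' i) ^ 2 = ∑ i, (u i) ^ 2 := by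
      have h1 : ∑ i, (u' i) ^ 2 = ∑ i, (w i) ^ 2 :=
        Equiv.sum_comp σ (fun i => (w i) ^ 2)
      rw [h1]
      exact Finset.sum_congr rfl fun i _ => sq_abs _
    have hquad : ∑ i, (u' i - x i) ^ 2 ≤ ∑ i, (u i - x i) ^ 2 := by
      rw [sum_sq_expand, sum_sq_expand, hsq]
      linarith
    refine ⟨u', ?_, hdesc', hnn'⟩
    intro v
    have h1 : ((1 / (2 * lam) * ∑ i, (u' i - x i) ^ 2 : ℝ) : EReal) + f u' ≤
        ((1 / (2 * lam) * ∑ i, (u i - x i) ^ 2 : ℝ) : EReal) + f u := by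
      rw [hfu']
      refine add_le_add ?_ le_rfl
      exact EReal.coe_le_coe_iff.mpr (mul_le_mul_of_nonneg_left hquad hcpos.le)
    exact le_trans h1 (hu v)
  · -- part (b)
    intro hxpos u hu i
    by_contra hui
    push_neg at hui
    obtain ⟨r, hr⟩ := hfin u hu
    set ε : Fin n → ℝ := fun j => if j = i then -1 else 1 with hε
    have hεpm : ∀ j, ε j = 1 ∨ ε j = -1 := by
      intro j; by_cases h : j = i <;> simp [hε, h]
    obtain ⟨P, hP, hPu⟩ := signedPerm_apply (Equiv.refl _) ε hεpm u
    set v : Fin n → ℝ := fun j => ε j * u j with hv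
    have hPv : P.mulVec u = v := hPu
    have hfv : f v = f u := by rw [← hPv]; exact hinv P hP u
    -- quadratic strictly decreases
    have hquad : ∑ j, (v j - x j) ^ 2 < ∑ j, (u j - x j) ^ 2 := by
      have hvsum : ∑ j, (v j - x j) ^ 2 =
          (-u i - x i) ^ 2 + ∑ j ∈ Finset.univ.erase i, (u j - x j) ^ 2 := by
        have hfun : (fun j => (v j - x j) ^ 2) =
            Function.update (fun j => (u j - x j) ^ 2) i ((-u i - x i) ^ 2) := by
          funext j
          by_cases h : j = i
          · subst h; simp [hv, hε]
          · simp [hv, hε, h, Function.update_of_ne h]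
        rw [hfun, Finset.sum_update_of_mem (Finset.mem_univ i), Finset.erase_eq]
      have husum : ∑ j, (u j - x j) ^ 2 =
          (u i - x i) ^ 2 + ∑ j ∈ Finset.univ.erase i, (u j - x j) ^ 2 :=
        (Finset.add_sum_erase _ _ (Finset.mem_univ i)).symm
      have hlt : (-u i - x i) ^ 2 < (u i - x i) ^ 2 := by
        nlinarith [hxpos i, hui]
      rw [hvsum, husum]
      linarith
    have h := hu v
    rw [hr, hfv, hr] at h
    rw [← EReal.coe_add, ← EReal.coe_add, EReal.coe_le_coe_iff] at h
    have : 1 / (2 * lam) * ∑ j, (v j - x j) ^ 2 <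
        1 / (2 * lam) * ∑ j, (u j - x j) ^ 2 :=
      mul_lt_mul_of_pos_left hquad hcpos
    linarith
end

section
/- Let f : ℝⁿ → ℝ ∪ {+∞} be proper, lower semicontinuous, scale invariant, and signed permutation invariant; let ρ > 0 and x ∈ ℝⁿ_↓. Define F(u) := (ρ/2)‖u − x‖₂² + f(u) and G(w) := −(ρ/2)⟨x, w⟩² + f(w). Suppose w* is a global minimizer of G over S^{n-1}_+. Then min_{u ∈ ℝⁿ} F(u) = min{F(0), F(⟨x, w*⟩ w*)}. Consequently, 0 ∈ prox_{(1/ρ)f}(x) if and only if F(0) ≤ F(⟨x, w*⟩ w*), and ⟨x, w*⟩ w* ∈ prox_{(1/ρ)f}(x) if and only if F(⟨x, w*⟩ w*) ≤ F(0). -/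
theorem stmt_3 {n : ℕ} (f : (Fin n → ℝ) → EReal)
    (hproper : ∃ x, f x ≠ ⊤) (hnobot : ∀ x, f x ≠ ⊥)
    (hlsc : LowerSemicontinuous f)
    (hperminv : ∀ P : Matrix (Fin n) (Fin n) ℝ, IsSignedPerm P → ∀ x, f (P.mulVec x) = f x)
    (hscale : ∀ α : ℝ, 0 < α → ∀ x : Fin n → ℝ, f (α • x) = f x)
    (ρ : ℝ) (hρ : 0 < ρ)
    (x : Fin n → ℝ) (hdesc : ∀ i j : Fin n, i ≤ j → x j ≤ x i) (hnonneg : ∀ i, 0 ≤ x i)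
    (F G : (Fin n → ℝ) → EReal)
    (hF : ∀ u, F u = ((ρ / 2 * ∑ i, (u i - x i) ^ 2 : ℝ) : EReal) + f u)
    (hG : ∀ w, G w = ((-(ρ / 2) * (∑ i, x i * w i) ^ 2 : ℝ) : EReal) + f w)
    (wstar : Fin n → ℝ) (hw1 : ∑ i, (wstar i) ^ 2 = 1) (hw2 : ∀ i, 0 ≤ wstar i)
    (hwmin : ∀ w : Fin n → ℝ, (∑ i, (w i) ^ 2 = 1) → (∀ i, 0 ≤ w i) → G wstar ≤ G w) :
    (∀ u : Fin n → ℝ, min (F 0) (F ((∑ i, x i * wstar i) • wstar)) ≤ F u) ∧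
    ((∀ v : Fin n → ℝ, F 0 ≤ F v) ↔ F 0 ≤ F ((∑ i, x i * wstar i) • wstar)) ∧
    ((∀ v : Fin n → ℝ, F ((∑ i, x i * wstar i) • wstar) ≤ F v) ↔
      F ((∑ i, x i * wstar i) • wstar) ≤ F 0) := by
  -- Step 1: f 0 ≤ f w for all w (lsc + scale invariance)
  have hf0 : ∀ w : Fin n → ℝ, f 0 ≤ f w := by
    intro w
    by_contra hcon
    push_neg at hcon
    have hev := hlsc 0 (f w) hcon
    have htend : Filter.Tendsto (fun k : ℕ => (1 / ((k : ℝ) + 1)) • w)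
        Filter.atTop (nhds (0 : Fin n → ℝ)) := by
      have h1 : Filter.Tendsto (fun k : ℕ => 1 / ((k : ℝ) + 1)) Filter.atTop (nhds (0:ℝ)) :=
        tendsto_one_div_add_atTop_nhds_zero_nat
      simpa using h1.smul_const w
    obtain ⟨k, hk⟩ := (htend.eventually hev).exists
    rw [hscale (1 / ((k : ℝ) + 1)) (by positivity) w] at hk
    exact lt_irrefl _ hk
  -- Step 2: f |w| = f w (signed permutation invariance)
  have habs : ∀ w : Fin n → ℝ, f (fun i => |w i|) = f w := by
    intro w
    set P : Matrix (Fin n) (Fin n) ℝ :=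
      Matrix.of fun i j => if j = i then (if 0 ≤ w i then (1:ℝ) else -1) else 0 with hP
    have hsp : IsSignedPerm P :=
      ⟨Equiv.refl _, fun i => if 0 ≤ w i then 1 else -1,
        fun i => by by_cases h : 0 ≤ w i <;> simp [h], fun i j => rfl⟩
    have hmv : P.mulVec w = fun i => |w i| := by
      funext i
      simp only [Matrix.mulVec, dotProduct, hP, Matrix.of_apply, ite_mul, zero_mul]
      rw [Finset.sum_ite_eq' Finset.univ i]
      rcases le_or_gt 0 (w i) with h | h
      · simp [h, abs_of_nonneg h]
      · simp [not_le.2 h, abs_of_neg h]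
    rw [← hmv]
    exact hperminv P hsp w
  set t := ∑ i, x i * wstar i with htdef
  set S := ∑ i, (x i) ^ 2 with hSdef
  set C : EReal := ((ρ / 2 * S : ℝ) : EReal) + G wstar with hCdef
  have ht0 : 0 ≤ t := Finset.sum_nonneg fun i _ => mul_nonneg (hnonneg i) (hw2 i)
  -- Step 3: key bound for points r • w with w on the unit sphere
  have key : ∀ w : Fin n → ℝ, (∑ i, (w i) ^ 2 = 1) → ∀ r : ℝ, 0 < r →
      C ≤ ((ρ / 2 * ∑ i, (r * w i - x i) ^ 2 : ℝ) : EReal) + f w := by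
    intro w hw r hr
    set a : Fin n → ℝ := fun i => |w i| with hadef
    have ha1 : ∑ i, (a i) ^ 2 = 1 := by simpa [hadef, sq_abs] using hw
    have ha2 : ∀ i, 0 ≤ a i := fun i => abs_nonneg _
    have hfa : f a = f w := habs w
    have hGineq : G wstar ≤ G a := hwmin a ha1 ha2
    set s := ∑ i, x i * a i with hsdef
    have hws : (∑ i, x i * w i) ≤ s := by
      apply Finset.sum_le_sum
      intro i _
      exact mul_le_mul_of_nonneg_left (le_abs_self _) (hnonneg i)
    have hexp : ∑ i, (r * w i - x i) ^ 2 = r ^ 2 - 2 * r * (∑ i, x i * w i) + S := by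
      have h1 : ∀ i ∈ Finset.univ, (r * w i - x i) ^ 2
          = r ^ 2 * (w i) ^ 2 - 2 * r * (x i * w i) + (x i) ^ 2 := fun i _ => by ring
      rw [Finset.sum_congr rfl h1, Finset.sum_add_distrib, Finset.sum_sub_distrib,
        ← Finset.mul_sum, ← Finset.mul_sum, hw, ← hSdef]
      ring
    have hreal : ρ / 2 * S + (-(ρ / 2) * s ^ 2) ≤ ρ / 2 * (∑ i, (r * w i - x i) ^ 2) := by
      rw [hexp]
      nlinarith [sq_nonneg (r - s), mul_le_mul_of_nonneg_left hws hr.le, hρ]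
    calc C ≤ ((ρ / 2 * S : ℝ) : EReal) + G a := add_le_add_right hGineq _
      _ = ((ρ / 2 * S + (-(ρ / 2) * s ^ 2) : ℝ) : EReal) + f a := by
          rw [hG a, ← hsdef, ← add_assoc, ← EReal.coe_add]
      _ ≤ ((ρ / 2 * ∑ i, (r * w i - x i) ^ 2 : ℝ) : EReal) + f w := by
          rw [← hfa]
          exact add_le_add_left (EReal.coe_le_coe_iff.2 hreal) _
  -- Step 4: C ≤ F u for u ≠ 0
  have h1 : ∀ u : Fin n → ℝ, u ≠ 0 → C ≤ F u := by
    intro u hu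
    have hsum_pos : 0 < ∑ i, (u i) ^ 2 := by
      rcases Function.ne_iff.1 hu with ⟨i0, hi0⟩
      have hi0' : u i0 ≠ 0 := by simpa using hi0
      exact Finset.sum_pos' (fun i _ => sq_nonneg _)
        ⟨i0, Finset.mem_univ _, pow_two_pos_of_ne_zero hi0'⟩
    set r := Real.sqrt (∑ i, (u i) ^ 2) with hrdef
    have hrpos : 0 < r := Real.sqrt_pos.2 hsum_pos
    have hr2 : r ^ 2 = ∑ i, (u i) ^ 2 := Real.sq_sqrt hsum_pos.le
    set w : Fin n → ℝ := r⁻¹ • u with hwdef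
    have hu_eq : u = r • w := by
      rw [hwdef, smul_smul, mul_inv_cancel₀ hrpos.ne', one_smul]
    have hw1' : ∑ i, (w i) ^ 2 = 1 := by
      simp only [hwdef, Pi.smul_apply, smul_eq_mul, mul_pow]
      rw [← Finset.mul_sum, ← hr2, inv_pow, inv_mul_cancel₀ (pow_ne_zero 2 hrpos.ne')]
    have h3 : ∀ i, u i = r * w i := fun i => by
      conv_lhs => rw [hu_eq]
      simp
    have hFu : F u = ((ρ / 2 * ∑ i, (r * w i - x i) ^ 2 : ℝ) : EReal) + f w := by
      rw [hF u]
      have h2 : f u = f w := by rw [hu_eq]; exact hscale r hrpos w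
      rw [h2]
      congr 3
      exact Finset.sum_congr rfl fun i _ => by rw [h3 i]
    rw [hFu]
    exact key w hw1' r hrpos
  -- Step 5: min (F 0) (F (t • wstar)) ≤ C
  have hF0 : F 0 = ((ρ / 2 * S : ℝ) : EReal) + f 0 := by
    rw [hF 0, hSdef]
    norm_num
  have hCmin : min (F 0) (F (t • wstar)) ≤ C := by
    rcases eq_or_lt_of_le ht0 with ht | ht
    · have h0 : (t • wstar) = (0 : Fin n → ℝ) := by rw [← ht, zero_smul]
      rw [h0, min_self]
      have hGw : G wstar = f wstar := by
        rw [hG wstar, ← htdef, ← ht]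
        norm_num
      rw [hCdef, hGw, hF0]
      exact add_le_add_right (hf0 wstar) _
    · have hFu : F (t • wstar) = C := by
        rw [hF (t • wstar)]
        have hfw : f (t • wstar) = f wstar := hscale t ht wstar
        have hsum : ∑ i, ((t • wstar) i - x i) ^ 2 = S - t ^ 2 := by
          have hh : ∀ i ∈ Finset.univ, ((t • wstar) i - x i) ^ 2
              = t ^ 2 * (wstar i) ^ 2 - 2 * t * (x i * wstar i) + (x i) ^ 2 := fun i _ => by
            simp only [Pi.smul_apply, smul_eq_mul]; ring
          rw [Finset.sum_congr rfl hh, Finset.sum_add_distrib, Finset.sum_sub_distrib,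
            ← Finset.mul_sum, ← Finset.mul_sum, hw1, ← htdef, ← hSdef]
          ring
        rw [hfw, hsum, hCdef, hG wstar, ← htdef, ← add_assoc, ← EReal.coe_add]
        congr 2
        ring
      rw [← hFu]
      exact min_le_right _ _
  -- Step 6: conclude
  have part1 : ∀ u : Fin n → ℝ, min (F 0) (F (t • wstar)) ≤ F u := by
    intro u
    by_cases hu : u = 0
    · rw [hu]; exact min_le_left _ _
    · exact le_trans hCmin (h1 u hu)
  refine ⟨part1, ⟨fun h => h _, fun h v => ?_⟩, ⟨fun h => h _, fun h v => ?_⟩⟩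
  · have := part1 v
    rwa [min_eq_left h] at this
  · have := part1 v
    rwa [min_eq_right h] at this
end

section
/- Let ρ > 0 and x ∈ ℝⁿ₊, and let A_{ρ,x} = 2ee^⊤ − ρxx^⊤. (i) If x = αe for some α > 0, then A_{ρ,x} = (2 − ρα²)ee^⊤; in particular, if ρα² = 2 then A_{ρ,x} = 0, and otherwise its only nonzero eigenvalue is (2 − ρα²)n with eigenvector e/√n. (ii) If x is nonzero and not a scalar multiple of e, then Δ > 0, λ̄ = 2n − α̲ > 0, λ̲ = 2n − ᾱ < 0, the vectors w̄ = x − (ᾱ/(ρ‖x‖₁))e and w̲ = x − (α̲/(ρ‖x‖₁))e are nonzero and satisfy A_{ρ,x} w̄ = λ̄ w̄ and A_{ρ,x} w̲ = λ̲ w̲, and every other eigenvalue of A_{ρ,x} equals 0 (A_{ρ,x} has rank at most 2). -/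
theorem stmt_6 {n : ℕ} (hn : 0 < n) (ρ : ℝ) (hρ : 0 < ρ)
    (x : Fin n → ℝ) (hx : ∀ i, 0 ≤ x i)
    (A : Matrix (Fin n) (Fin n) ℝ) (hA : ∀ i j, A i j = 2 - ρ * x i * x j)
    (Δ αlo αhi lamhi lamlo : ℝ) (whi wlo : Fin n → ℝ)
    (hΔ : Δ = ((ρ / 2) * (∑ i, (x i) ^ 2) + n) ^ 2 - 2 * ρ * (∑ i, |x i|) ^ 2)
    (hαlo : αlo = ((ρ / 2) * (∑ i, (x i) ^ 2) + n) - Real.sqrt Δ)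
    (hαhi : αhi = ((ρ / 2) * (∑ i, (x i) ^ 2) + n) + Real.sqrt Δ)
    (hlamhi : lamhi = 2 * n - αlo) (hlamlo : lamlo = 2 * n - αhi)
    (hwhi : ∀ i, whi i = x i - αhi / (ρ * ∑ j, |x j|))
    (hwlo : ∀ i, wlo i = x i - αlo / (ρ * ∑ j, |x j|)) :
    -- (i) the case `x = α e` with `α > 0`
    ((∀ α : ℝ, 0 < α → x = (fun _ => α) →
      ((∀ i j, A i j = 2 - ρ * α ^ 2) ∧
       (ρ * α ^ 2 = 2 → A = 0) ∧
       (ρ * α ^ 2 ≠ 2 →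
         A.mulVec (fun _ => (Real.sqrt n)⁻¹) =
           ((2 - ρ * α ^ 2) * n) • (fun _ => (Real.sqrt n)⁻¹) ∧
         ∀ (μ : ℝ) (v : Fin n → ℝ), v ≠ 0 → A.mulVec v = μ • v →
           μ = 0 ∨ μ = (2 - ρ * α ^ 2) * n))) ∧
    -- (ii) the case where `x` is nonzero and not a scalar multiple of `e`
    ((x ≠ 0 ∧ ∀ c : ℝ, x ≠ fun _ => c) →
      (0 < Δ ∧ 0 < lamhi ∧ lamlo < 0 ∧ whi ≠ 0 ∧ wlo ≠ 0 ∧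
       A.mulVec whi = lamhi • whi ∧ A.mulVec wlo = lamlo • wlo ∧
       (∀ (μ : ℝ) (v : Fin n → ℝ), v ≠ 0 → A.mulVec v = μ • v →
         μ = 0 ∨ μ = lamhi ∨ μ = lamlo) ∧
       A.rank ≤ 2))) := by
  classical
  have expand : ∀ (v : Fin n → ℝ) (i : Fin n),
      A.mulVec v i = 2 * (∑ j, v j) - ρ * x i * (∑ j, x j * v j) := by
    intro v i
    have h1 : ∀ j, A i j * v j = 2 * v j - ρ * x i * (x j * v j) := fun j => by rw [hA]; ring
    simp only [Matrix.mulVec, dotProduct, h1, Finset.sum_sub_distrib, ← Finset.mul_sum]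
  constructor
  · -- part (i)
    intro α hα hxα
    have hxi : ∀ i, x i = α := fun i => congrFun hxα i
    have hAij : ∀ i j, A i j = 2 - ρ * α ^ 2 := fun i j => by rw [hA, hxi, hxi]; ring
    refine ⟨hAij, ?_, ?_⟩
    · intro h2
      ext i j
      simp only [Matrix.zero_apply]
      rw [hAij]; linarith
    · intro _
      constructor
      · funext i
        rw [expand]
        simp only [hxi, Pi.smul_apply, smul_eq_mul, Finset.sum_const, Finset.card_univ,
          Fintype.card_fin, nsmul_eq_mul]
        ring
      · intro μ v hv hAv
        by_cases hμ : μ = 0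
        · exact Or.inl hμ
        right
        have hS : ∀ i, μ * v i = (2 - ρ * α ^ 2) * ∑ j, v j := by
          intro i
          have h1 := congrFun hAv i
          rw [expand] at h1
          simp only [hxi, Pi.smul_apply, smul_eq_mul, ← Finset.mul_sum] at h1
          linear_combination -h1
        obtain ⟨i0, hi0⟩ : ∃ i, v i ≠ 0 := Function.ne_iff.mp hv
        have hSne : (∑ j, v j) ≠ 0 := by
          intro h0
          apply hi0
          have h1 := hS i0
          rw [h0, mul_zero] at h1
          exact (mul_eq_zero.mp h1).resolve_left hμ
        have hsum : μ * (∑ j, v j) = ((2 - ρ * α ^ 2) * n) * (∑ j, v j) := by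
          have h2 : ∑ i, μ * v i = ∑ _i : Fin n, (2 - ρ * α ^ 2) * ∑ j, v j :=
            Finset.sum_congr rfl fun i _ => hS i
          rw [← Finset.mul_sum, Finset.sum_const, Finset.card_univ, Fintype.card_fin,
            nsmul_eq_mul] at h2
          rw [h2]; ring
        exact mul_right_cancel₀ hSne hsum
  · -- part (ii)
    rintro ⟨hx0, hxc⟩
    have habs : (∑ i, |x i|) = ∑ i, x i :=
      Finset.sum_congr rfl fun i _ => abs_of_nonneg (hx i)
    set s1 : ℝ := ∑ i, x i with hs1def
    set s2 : ℝ := ∑ i, (x i) ^ 2 with hs2def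
    have hs1 : 0 < s1 := by
      obtain ⟨i0, hi0⟩ : ∃ i, x i ≠ 0 := Function.ne_iff.mp hx0
      exact Finset.sum_pos' (fun i _ => hx i)
        ⟨i0, Finset.mem_univ _, lt_of_le_of_ne (hx i0) (Ne.symm hi0)⟩
    -- strict Cauchy-Schwarz
    have hcs : s1 ^ 2 < n * s2 := by
      have i0 : Fin n := ⟨0, hn⟩
      obtain ⟨j0, hj0⟩ : ∃ j, x j ≠ x i0 := Function.ne_iff.mp (hxc (x i0))
      have inner : ∀ i : Fin n, ∑ j, (x i - x j) ^ 2 = n * x i ^ 2 - 2 * x i * s1 + s2 := by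
        intro i
        have h1 : ∀ j, (x i - x j) ^ 2 = x i ^ 2 - 2 * x i * x j + x j ^ 2 := fun j => by ring
        simp only [h1, Finset.sum_add_distrib, Finset.sum_sub_distrib, Finset.sum_const,
          Finset.card_univ, Fintype.card_fin, nsmul_eq_mul, ← Finset.mul_sum, ← hs1def, ← hs2def]
      have key : ∑ i, ∑ j, (x i - x j) ^ 2 = 2 * (n * s2 - s1 ^ 2) := by
        simp only [inner, Finset.sum_add_distrib, Finset.sum_sub_distrib, Finset.sum_const,
          Finset.card_univ, Fintype.card_fin, nsmul_eq_mul, ← Finset.mul_sum, ← hs1def, ← hs2def]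
        rw [show (∑ i, 2 * x i * s1) = 2 * s1 * s1 by
          rw [show (∑ i, 2 * x i * s1) = (∑ i, x i) * (2 * s1) from by
            rw [Finset.sum_mul]; exact Finset.sum_congr rfl fun i _ => by ring]
          rw [← hs1def]; ring]
        ring
      have pos : 0 < ∑ i, ∑ j, (x i - x j) ^ 2 := by
        refine Finset.sum_pos' (fun i _ => Finset.sum_nonneg fun j _ => sq_nonneg _)
          ⟨i0, Finset.mem_univ _, ?_⟩
        refine Finset.sum_pos' (fun j _ => sq_nonneg _) ⟨j0, Finset.mem_univ _, ?_⟩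
        have hne : x i0 - x j0 ≠ 0 := sub_ne_zero.mpr (Ne.symm hj0)
        exact lt_of_le_of_ne (sq_nonneg _) (Ne.symm (pow_ne_zero 2 hne))
      linarith [key ▸ pos]
    have hΔeq : Δ = ((ρ / 2) * s2 + n) ^ 2 - 2 * ρ * s1 ^ 2 := by rw [hΔ, habs]
    have hΔpos : 0 < Δ := by
      rw [hΔeq]
      nlinarith [sq_nonneg ((ρ / 2) * s2 - n), mul_pos hρ (sub_pos.mpr hcs)]
    set σ : ℝ := Real.sqrt Δ with hσdef
    have hσpos : 0 < σ := Real.sqrt_pos.mpr hΔpos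
    have hσ2 : σ ^ 2 = ((ρ / 2) * s2 + n) ^ 2 - 2 * ρ * s1 ^ 2 := by
      rw [hσdef, Real.sq_sqrt hΔpos.le, hΔeq]
    have hsum : αlo + αhi = ρ * s2 + 2 * n := by rw [hαlo, hαhi]; ring
    have hprod : αlo * αhi = 2 * ρ * s1 ^ 2 := by
      rw [hαlo, hαhi]; linear_combination -hσ2
    have hlamhipos : 0 < lamhi := by
      rw [hlamhi, hαlo]
      nlinarith [mul_pos hρ (sub_pos.mpr hcs), hσpos, hσ2]
    have hlamloneg : lamlo < 0 := by
      rw [hlamlo, hαhi]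
      nlinarith [mul_pos hρ (sub_pos.mpr hcs), hσpos, hσ2]
    have hρs1 : ρ * s1 ≠ 0 := ne_of_gt (mul_pos hρ hs1)
    have hwhi' : ∀ i, whi i = x i - αhi / (ρ * s1) := by intro i; rw [hwhi, habs]
    have hwlo' : ∀ i, wlo i = x i - αlo / (ρ * s1) := by intro i; rw [hwlo, habs]
    have hwne : ∀ (w : Fin n → ℝ) (β : ℝ), (∀ i, w i = x i - β / (ρ * s1)) → w ≠ 0 := by
      intro w β hw h0
      apply hxc (β / (ρ * s1))
      funext i
      have := congrFun h0 i
      rw [hw] at this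
      simp only [Pi.zero_apply] at this
      linarith
    -- generic eigenvector computation
    have heig : ∀ (w : Fin n → ℝ) (β γ : ℝ), (∀ i, w i = x i - β / (ρ * s1)) →
        β + γ = ρ * s2 + 2 * n → β * γ = 2 * ρ * s1 ^ 2 → A.mulVec w = (2 * n - γ) • w := by
      intro w β γ hw hs hp
      funext i
      rw [expand]
      have h1 : ∑ j, w j = s1 - n * (β / (ρ * s1)) := by
        simp only [hw, Finset.sum_sub_distrib, Finset.sum_const, Finset.card_univ,
          Fintype.card_fin, nsmul_eq_mul, ← hs1def]
      have h2 : ∑ j, x j * w j = s2 - (β / (ρ * s1)) * s1 := by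
        have h3 : ∀ j, x j * w j = x j ^ 2 - (β / (ρ * s1)) * x j := fun j => by rw [hw]; ring
        simp only [h3, Finset.sum_sub_distrib, ← Finset.mul_sum, ← hs1def, ← hs2def]
      rw [h1, h2, Pi.smul_apply, smul_eq_mul, hw]
      refine mul_left_cancel₀ hρs1 ?_
      have hden : ρ * s1 * (β / (ρ * s1)) = β := by field_simp
      linear_combination (ρ * s1 * x i) * hden + (ρ * s1 * x i) * hs - γ * hden - hp
    refine ⟨hΔpos, hlamhipos, hlamloneg, hwne whi αhi hwhi', hwne wlo αlo hwlo', ?_, ?_, ?_, ?_⟩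
    · rw [hlamhi]
      exact heig whi αhi αlo hwhi' (by linarith) (by linear_combination hprod)
    · rw [hlamlo]
      exact heig wlo αlo αhi hwlo' (by linarith) (by linear_combination hprod)
    · -- spectrum
      intro μ v hv hAv
      by_cases hμ : μ = 0
      · exact Or.inl hμ
      right
      set S : ℝ := ∑ j, v j with hSdef
      set T : ℝ := ∑ j, x j * v j with hTdef
      have hEq : ∀ i, 2 * S - ρ * x i * T = μ * v i := by
        intro i
        have h1 := congrFun hAv i
        rw [expand] at h1
        simpa using h1
      have hxT : ∑ i, ρ * x i * T = ρ * s1 * T := by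
        rw [hs1def, ← Finset.sum_mul, ← Finset.mul_sum]
      have E1 : 2 * n * S - ρ * s1 * T = μ * S := by
        have h2 : ∑ i, (2 * S - ρ * x i * T) = ∑ i, μ * v i :=
          Finset.sum_congr rfl fun i _ => hEq i
        rw [← Finset.mul_sum, ← hSdef] at h2
        rw [← h2, Finset.sum_sub_distrib, Finset.sum_const, Finset.card_univ, Fintype.card_fin,
          nsmul_eq_mul, hxT]
        ring
      have E2 : 2 * s1 * S - ρ * s2 * T = μ * T := by
        have h2 : ∑ i, x i * (2 * S - ρ * x i * T) = ∑ i, x i * (μ * v i) :=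
          Finset.sum_congr rfl fun i _ => by rw [hEq i]
        have h3 : ∑ i, x i * (μ * v i) = μ * T := by
          rw [hTdef, Finset.mul_sum]
          exact Finset.sum_congr rfl fun i _ => by ring
        have h4 : ∑ i, x i * (2 * S - ρ * x i * T) = 2 * S * s1 - ρ * T * s2 := by
          have h5 : ∀ i : Fin n, x i * (2 * S - ρ * x i * T) =
              2 * S * x i - ρ * T * x i ^ 2 := fun i => by ring
          simp only [h5, Finset.sum_sub_distrib, ← Finset.mul_sum, ← hs1def, ← hs2def]
        rw [h3, h4] at h2
        linarith [h2]
      have hT : T ≠ 0 := by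
        intro hT0
        by_cases hS0 : S = 0
        · apply hv
          funext i
          have h1 := hEq i
          rw [hT0, hS0] at h1
          simp only [Pi.zero_apply]
          have : μ * v i = 0 := by linarith
          exact (mul_eq_zero.mp this).resolve_left hμ
        · have hvc : ∀ i, v i = 2 * S / μ := by
            intro i
            have h1 := hEq i
            rw [hT0] at h1
            field_simp
            linarith
          have hTval : T = 2 * S / μ * s1 := by
            rw [hTdef]
            simp only [hvc, ← Finset.sum_mul]
            rw [← hs1def]; ring
          rw [hT0] at hTval
          have : 2 * S / μ * s1 ≠ 0 := by
            apply mul_ne_zero _ hs1.ne'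
            exact div_ne_zero (by intro h; apply hS0; linarith) hμ
          exact this hTval.symm
      have quad : ((μ - 2 * n) * (μ + ρ * s2)) * T = (-(2 * ρ * s1 ^ 2)) * T := by
        linear_combination (-(μ - 2 * n)) * E2 - 2 * s1 * E1
      have quad2 : (μ - 2 * n) * (μ + ρ * s2) = -(2 * ρ * s1 ^ 2) :=
        mul_right_cancel₀ hT quad
      have hfac : (μ - lamhi) * (μ - lamlo) = 0 := by
        rw [hlamhi, hlamlo]
        linear_combination quad2 + (μ - 2 * n) * hsum + hprod
      rcases mul_eq_zero.mp hfac with h | h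
      · exact Or.inl (sub_eq_zero.mp h)
      · exact Or.inr (sub_eq_zero.mp h)
    · -- rank
      have hrange : LinearMap.range A.mulVecLin ≤
          Submodule.span ℝ {(fun _ => (1:ℝ) : Fin n → ℝ), x} := by
        rintro y ⟨v, rfl⟩
        have h1 : A.mulVecLin v = (2 * ∑ j, v j) • (fun _ => (1:ℝ) : Fin n → ℝ) +
            (-(ρ * ∑ j, x j * v j)) • x := by
          funext i
          rw [Matrix.mulVecLin_apply, expand]
          simp only [Pi.add_apply, Pi.smul_apply, smul_eq_mul]
          ring
        rw [h1]
        exact Submodule.add_mem _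
          (Submodule.smul_mem _ _ (Submodule.subset_span (by left; rfl)))
          (Submodule.smul_mem _ _ (Submodule.subset_span (by right; rfl)))
      rw [Matrix.rank]
      refine le_trans (Submodule.finrank_mono hrange) ?_
      refine le_trans (finrank_span_le_card _) ?_
      rw [Set.toFinset_insert, Set.toFinset_singleton]
      exact le_trans (Finset.card_insert_le _ _) (by simp)
end

section
/- Let ρ > 0 and let x ∈ ℝⁿ_↓ be nonzero. Then x₁ − α̲/(ρ‖x‖₁) ≥ 0, where α̲ = ((ρ/2)‖x‖₂² + n) − √Δ and Δ = ((ρ/2)‖x‖₂² + n)² − 2ρ‖x‖₁². Moreover, if x is not a scalar multiple of the all-ones vector e, then x₁ − α̲/(ρ‖x‖₁) > 0. -/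
set_option maxHeartbeats 1000000


theorem stmt_7 {n : ℕ} (hn : 0 < n) (ρ : ℝ) (hρ : 0 < ρ)
    (x : Fin n → ℝ) (hdesc : ∀ i j : Fin n, i ≤ j → x j ≤ x i)
    (hnonneg : ∀ i, 0 ≤ x i) (hx0 : x ≠ 0)
    (Δ αlo : ℝ)
    (hΔ : Δ = ((ρ / 2) * (∑ i, (x i) ^ 2) + n) ^ 2 - 2 * ρ * (∑ i, |x i|) ^ 2)
    (hαlo : αlo = ((ρ / 2) * (∑ i, (x i) ^ 2) + n) - Real.sqrt Δ) :
    0 ≤ x ⟨0, hn⟩ - αlo / (ρ * ∑ i, |x i|) ∧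
    ((∀ c : ℝ, x ≠ fun _ => c) → 0 < x ⟨0, hn⟩ - αlo / (ρ * ∑ i, |x i|)) := by
  have habs : ∀ i, |x i| = x i := fun i => abs_of_nonneg (hnonneg i)
  simp only [habs] at hΔ ⊢
  set S1 := ∑ i, x i with hS1
  set S2 := ∑ i, (x i) ^ 2 with hS2
  set x1 := x ⟨0, hn⟩ with hx1def
  have hmax : ∀ i, x i ≤ x1 := by
    intro i
    rw [hx1def]
    exact hdesc ⟨0, hn⟩ i (by simp [Fin.le_def])
  obtain ⟨i0, hi0⟩ : ∃ i, x i ≠ 0 := Function.ne_iff.mp hx0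
  have hi0pos : 0 < x i0 := (hnonneg i0).lt_of_ne (Ne.symm hi0)
  have hS1pos : 0 < S1 := by
    rw [hS1]
    exact Finset.sum_pos' (fun i _ => hnonneg i) ⟨i0, Finset.mem_univ _, hi0pos⟩
  have hx1pos : 0 < x1 := lt_of_lt_of_le hi0pos (hmax i0)
  have hn' : (0:ℝ) < n := by exact_mod_cast hn
  have hS2leS1x1 : S2 ≤ S1 * x1 := by
    rw [hS2, hS1, Finset.sum_mul]
    apply Finset.sum_le_sum
    intro i _
    have := hmax i
    have := hnonneg i
    nlinarith
  set b := (ρ / 2) * S2 + (n : ℝ) with hb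
  set c := ρ * S1 * x1 with hc
  clear_value S1 S2 x1 b c
  have hρS1 : 0 < ρ * S1 := mul_pos hρ hS1pos
  have hρS2 : ρ * S2 ≤ ρ * (S1 * x1) := mul_le_mul_of_nonneg_left hS2leS1x1 hρ.le
  -- sums of the two factors
  have hMsum : (∑ i, (x1 - x i)) = n * x1 - S1 := by
    rw [Finset.sum_sub_distrib, Finset.sum_const, Finset.card_univ, Fintype.card_fin,
      nsmul_eq_mul, hS1]
  have hGsum : (∑ i, (2 - ρ * x1 * x i)) = 2 * n - ρ * x1 * S1 := by
    rw [Finset.sum_sub_distrib, Finset.sum_const, Finset.card_univ, Fintype.card_fin,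
      nsmul_eq_mul, ← Finset.mul_sum, ← hS1]
    ring
  have hEsum : (∑ i, (x1 - x i) * (2 - ρ * x1 * x i))
      = 2 * n * x1 - 2 * S1 - ρ * x1 ^ 2 * S1 + ρ * x1 * S2 := by
    have hpt : ∀ i, (x1 - x i) * (2 - ρ * x1 * x i)
        = 2 * x1 - (2 + ρ * x1 ^ 2) * x i + (ρ * x1) * (x i) ^ 2 := fun i => by ring
    rw [Finset.sum_congr rfl fun i _ => hpt i]
    rw [Finset.sum_add_distrib, Finset.sum_sub_distrib, Finset.sum_const, Finset.card_univ,
      Fintype.card_fin, nsmul_eq_mul, ← Finset.mul_sum, ← Finset.mul_sum, ← hS1, ← hS2]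
    ring
  have hid : b ^ 2 - 2 * ρ * S1 ^ 2 - (b - c) ^ 2
      = ρ * S1 * (2 * n * x1 - 2 * S1 - ρ * x1 ^ 2 * S1 + ρ * x1 * S2) := by
    rw [hb, hc]; ring
  have hmono : Monovary (fun i => x1 - x i) (fun i => 2 - ρ * x1 * x i) := by
    intro i j hij
    simp only at hij ⊢
    have hxx : x j < x i := by
      by_contra hcon
      push_neg at hcon
      nlinarith [mul_le_mul_of_nonneg_left hcon (le_of_lt (mul_pos hρ hx1pos))]
    linarith
  have hcheb := hmono.sum_mul_sum_le_card_mul_sum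
  rw [hMsum, hGsum, hEsum, Fintype.card_fin] at hcheb
  have hMnonneg : (0:ℝ) ≤ n * x1 - S1 := by
    rw [← hMsum]
    exact Finset.sum_nonneg fun i _ => sub_nonneg.mpr (hmax i)
  -- nonstrict part
  have key : αlo ≤ c := by
    rcases le_or_gt b c with hbc | hbc
    · have := Real.sqrt_nonneg Δ
      rw [hαlo]
      linarith
    · have hG : 0 < 2 * n - ρ * x1 * S1 := by linarith
      have hE : 0 ≤ 2 * n * x1 - 2 * S1 - ρ * x1 ^ 2 * S1 + ρ * x1 * S2 := by
        nlinarith [mul_nonneg hMnonneg hG.le]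
      have hsq : (b - c) ^ 2 ≤ Δ := by
        rw [hΔ]
        nlinarith [mul_nonneg hρS1.le hE]
      have hle := Real.le_sqrt_of_sq_le hsq
      rw [hαlo]
      linarith
  constructor
  · rw [sub_nonneg, div_le_iff₀ hρS1]
    rw [hc] at key
    linarith [key]
  · intro hnc
    obtain ⟨i1, hi1⟩ : ∃ i, x i ≠ x1 := by
      by_contra hcon
      push_neg at hcon
      exact hnc x1 (funext hcon)
    have hi1lt : x i1 < x1 := (hmax i1).lt_of_ne hi1
    -- strict Cauchy–Schwarz
    have hrow : ∀ i, ∑ j, (x i - x j) ^ 2 = n * (x i) ^ 2 - 2 * (x i) * S1 + S2 := by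
      intro i
      have hpt : ∀ j, (x i - x j) ^ 2 = (x i) ^ 2 - (2 * x i) * x j + (x j) ^ 2 :=
        fun j => by ring
      rw [Finset.sum_congr rfl fun j _ => hpt j]
      rw [Finset.sum_add_distrib, Finset.sum_sub_distrib, Finset.sum_const, Finset.card_univ,
        Fintype.card_fin, nsmul_eq_mul, ← Finset.mul_sum, ← hS1, ← hS2]
      try ring
    have hdbl : ∑ i, ∑ j, (x i - x j) ^ 2 = 2 * (n * S2 - S1 ^ 2) := by
      rw [Finset.sum_congr rfl fun i _ => hrow i]
      rw [Finset.sum_add_distrib, Finset.sum_sub_distrib, Finset.sum_const, Finset.card_univ,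
        Fintype.card_fin, nsmul_eq_mul, ← Finset.mul_sum, ← Finset.sum_mul, ← Finset.mul_sum,
        ← hS1, ← hS2]
      ring
    have hlt0 : x i1 < x ⟨0, hn⟩ := by rw [← hx1def]; exact hi1lt
    have hrowpos : 0 < ∑ j, (x ⟨0, hn⟩ - x j) ^ 2 :=
      Finset.sum_pos' (fun j _ => sq_nonneg _)
        ⟨i1, Finset.mem_univ _, pow_pos (sub_pos.mpr hlt0) 2⟩
    have hdblpos : 0 < ∑ i, ∑ j, (x i - x j) ^ 2 :=
      Finset.sum_pos' (fun i _ => Finset.sum_nonneg fun j _ => sq_nonneg _)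
        ⟨⟨0, hn⟩, Finset.mem_univ _, hrowpos⟩
    have hCS : S1 ^ 2 < n * S2 := by
      rw [hdbl] at hdblpos
      linarith
    have hbsq : 2 * ρ * (n * S2) ≤ b ^ 2 := by
      rw [hb]
      linarith [sq_nonneg ((ρ / 2) * S2 - (n:ℝ))]
    have hΔpos : 0 < Δ := by
      rw [hΔ]
      have h2 : ρ * S1 ^ 2 < ρ * (n * S2) := mul_lt_mul_of_pos_left hCS hρ
      nlinarith
    have hsqrtpos : 0 < Real.sqrt Δ := Real.sqrt_pos.mpr hΔpos
    have keystrict : αlo < c := by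
      rcases le_or_gt b c with hbc | hbc
      · rw [hαlo]
        linarith
      · have hG : 0 < 2 * n - ρ * x1 * S1 := by linarith
        have hMpos : 0 < n * x1 - S1 := by
          rw [← hMsum]
          apply Finset.sum_pos' (fun i _ => sub_nonneg.mpr (hmax i))
          exact ⟨i1, Finset.mem_univ _, by linarith⟩
        have hE : 0 < 2 * n * x1 - 2 * S1 - ρ * x1 ^ 2 * S1 + ρ * x1 * S2 := by
          nlinarith [mul_pos hMpos hG]
        have hsq : (b - c) ^ 2 < Δ := by
          rw [hΔ]
          nlinarith [mul_pos hρS1 hE]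
        have hlt := Real.lt_sqrt_of_sq_lt hsq
        rw [hαlo]
        linarith
    rw [sub_pos, div_lt_iff₀ hρS1]
    rw [hc] at keystrict
    linarith [keystrict]
end

section
/- Let ρ > 0 and let x ∈ ℝⁿ_↓ be nonzero and not a scalar multiple of the all-ones vector e. If xₙ ≤ α̲/(ρ‖x‖₁), where α̲ = ((ρ/2)‖x‖₂² + n) − √Δ and Δ = ((ρ/2)‖x‖₂² + n)² − 2ρ‖x‖₁², then every global minimizer of ½wᵀA_{ρ,x}w over S^{n-1}_+ has at least one zero entry, and there exists a global minimizer w* with its last entry (w*)ₙ = 0. -/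
open Finset

lemma sum_one {n : ℕ} : ∑ _i : Fin n, (1:ℝ) = n := by simp

lemma sum_comb {n : ℕ} (a b c : ℝ) (f g h k : Fin n → ℝ)
    (hpt : ∀ i, k i = a * f i + b * g i + c * h i) :
    ∑ i, k i = a * (∑ i, f i) + b * (∑ i, g i) + c * (∑ i, h i) := by
  simp only [Finset.mul_sum, ← Finset.sum_add_distrib]
  exact Finset.sum_congr rfl fun i _ => hpt i

lemma objconv {n : ℕ} (ρ : ℝ) (x w : Fin n → ℝ) :
    (1/2 : ℝ) * ∑ i, ∑ j, (2 - ρ * x i * x j) * w i * w j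
      = (∑ i, w i)^2 - (ρ/2) * (∑ i, x i * w i)^2 := by
  have h1 : (∑ i, w i)^2 = ∑ i, ∑ j, w i * w j := by rw [sq, Finset.sum_mul_sum]
  have h2 : (∑ i, x i * w i)^2 = ∑ i, ∑ j, (x i * w i) * (x j * w j) := by
    rw [sq, Finset.sum_mul_sum]
  rw [h1, h2]
  simp only [Finset.mul_sum]
  rw [← Finset.sum_sub_distrib]
  refine Finset.sum_congr rfl fun i _ => ?_
  rw [← Finset.sum_sub_distrib]
  refine Finset.sum_congr rfl fun j _ => by ring


lemma perturb {n : ℕ} [NeZero n] (ρ : ℝ) (x w d : Fin n → ℝ)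
    (hw1 : ∑ i, (w i)^2 = 1) (hpos : ∀ i, 0 < w i)
    (hmin : ∀ v : Fin n → ℝ, (∑ i, (v i)^2 = 1) → (∀ i, 0 ≤ v i) →
       (∑ i, w i)^2 - (ρ/2)*(∑ i, x i * w i)^2
         ≤ (∑ i, v i)^2 - (ρ/2)*(∑ i, x i * v i)^2)
    (hdw : ∑ i, d i * w i = 0) :
    ((∑ i, w i)*(∑ i, d i) - (ρ/2)*(∑ i, x i * w i)*(∑ i, x i * d i) = 0) ∧
    ((∑ i, (d i)^2) * ((∑ i, w i)^2 - (ρ/2)*(∑ i, x i * w i)^2)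
       ≤ (∑ i, d i)^2 - (ρ/2)*(∑ i, x i * d i)^2) := by
  set S := ∑ i, w i with hS
  set P := ∑ i, x i * w i with hP
  set Sd := ∑ i, d i with hSd
  set Pd := ∑ i, x i * d i with hPd
  set D2 := ∑ i, (d i)^2 with hD2
  set B := S * Sd - (ρ/2) * P * Pd with hB
  set C := (Sd^2 - (ρ/2)*Pd^2) - D2 * (S^2 - (ρ/2)*P^2) with hC
  have hD2nn : 0 ≤ D2 := by
    rw [hD2]; exact Finset.sum_nonneg fun i _ => sq_nonneg _
  clear_value S P Sd Pd D2 B C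
  -- key inequality for admissible t
  have key : ∀ t : ℝ, (∀ i, 0 ≤ w i + t * d i) → 0 ≤ 2*t*B + t^2*C := by
    intro t ht
    have hN : (0:ℝ) < 1 + t^2 * D2 := by nlinarith [hD2nn, sq_nonneg t]
    set N := 1 + t^2 * D2 with hNdef
    have hsq : Real.sqrt N ^ 2 = N := Real.sq_sqrt hN.le
    have hsqpos : 0 < Real.sqrt N := Real.sqrt_pos.mpr hN
    set v : Fin n → ℝ := fun i => (w i + t * d i) / Real.sqrt N with hv
    clear_value v
    have hv1 : ∑ i, (v i)^2 = 1 := by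
      have e1 : ∑ i, (v i)^2 = (∑ i, ((w i)^2 + 2*t*(d i * w i) + t^2 * (d i)^2))/N := by
        rw [Finset.sum_div]
        refine Finset.sum_congr rfl fun i _ => ?_
        simp only [hv]
        rw [div_pow, hsq]
        ring
      rw [e1, Finset.sum_add_distrib, Finset.sum_add_distrib, ← Finset.mul_sum, ← Finset.mul_sum,
        hw1, hdw, ← hD2, div_eq_one_iff_eq hN.ne']
      rw [hNdef]; ring
    have hvnn : ∀ i, 0 ≤ v i := fun i => by
      rw [hv]; exact div_nonneg (ht i) hsqpos.le
    have hSv : ∑ i, v i = (S + t * Sd) / Real.sqrt N := by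
      rw [hS, hSd, show ((∑ i, w i) + t * ∑ i, d i) = ∑ i, (w i + t * d i) by
        rw [Finset.sum_add_distrib, Finset.mul_sum], Finset.sum_div]
      exact Finset.sum_congr rfl fun i _ => by rw [hv]
    have hPv : ∑ i, x i * v i = (P + t * Pd) / Real.sqrt N := by
      rw [hP, hPd, show ((∑ i, x i * w i) + t * ∑ i, x i * d i)
          = ∑ i, (x i * w i + t * (x i * d i)) by
        rw [Finset.sum_add_distrib, Finset.mul_sum], Finset.sum_div]
      refine Finset.sum_congr rfl fun i _ => ?_
      simp only [hv]
      ring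
    have hm := hmin v hv1 hvnn
    rw [hSv, hPv, div_pow, div_pow, hsq, ← mul_div_assoc, div_sub_div_same] at hm
    have hm2 := (le_div_iff₀ hN).mp hm
    have expand : 2*t*B + t^2*C
        = ((S + t*Sd)^2 - ρ/2*(P + t*Pd)^2) - (S^2 - ρ/2*P^2)*N := by
      rw [hB, hC, hNdef]; ring
    rw [expand]
    linarith [hm2]
  -- a bound t0 for admissibility
  have hne : (Finset.univ : Finset (Fin n)).Nonempty := Finset.univ_nonempty
  obtain ⟨t0, ht0, hfeas⟩ : ∃ t0 : ℝ, 0 < t0 ∧ ∀ t : ℝ, |t| ≤ t0 → ∀ i, 0 ≤ w i + t * d i := by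
    refine ⟨(Finset.univ.inf' hne w) / ((Finset.univ.sup' hne fun j => |d j|) + 1), ?_, ?_⟩
    · have hmpos : 0 < Finset.univ.inf' hne w := by
        rw [Finset.lt_inf'_iff]; exact fun i _ => hpos i
      have hMnn : 0 ≤ Finset.univ.sup' hne fun j => |d j| := by
        obtain ⟨i⟩ := (inferInstance : Nonempty (Fin n))
        exact le_trans (abs_nonneg (d i)) (Finset.le_sup' (fun j => |d j|) (Finset.mem_univ i))
      positivity
    · intro t ht i
      have hmpos : 0 < Finset.univ.inf' hne w := by
        rw [Finset.lt_inf'_iff]; exact fun i _ => hpos i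
      have hMnn : 0 ≤ Finset.univ.sup' hne fun j => |d j| := by
        obtain ⟨i⟩ := (inferInstance : Nonempty (Fin n))
        exact le_trans (abs_nonneg (d i)) (Finset.le_sup' (fun j => |d j|) (Finset.mem_univ i))
      set m := Finset.univ.inf' hne w
      set M := Finset.univ.sup' hne fun j => |d j|
      have h1 : m ≤ w i := Finset.inf'_le _ (Finset.mem_univ i)
      have h2 : |d i| ≤ M := Finset.le_sup' (fun j => |d j|) (Finset.mem_univ i)
      have h3 : -(|t| * |d i|) ≤ t * d i := by
        rw [← abs_mul]; exact neg_abs_le _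
      have h4 : |t| * |d i| ≤ (m / (M+1)) * M :=
        mul_le_mul ht h2 (abs_nonneg _) (by positivity)
      have h5 : (m / (M+1)) * M < m := by
        rw [div_mul_eq_mul_div, div_lt_iff₀ (by linarith)]
        nlinarith
      linarith
  have hCnn : 0 ≤ C := by
    have k1 := key t0 (hfeas t0 (by rw [abs_of_pos ht0]))
    have k2 := key (-t0) (hfeas (-t0) (by rw [abs_neg, abs_of_pos ht0]))
    nlinarith [k1, k2, mul_pos ht0 ht0]
  have hB0 : B = 0 := by
    by_contra hB0
    have habs : 0 < |B| := abs_pos.mpr hB0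
    have hBB : 0 < B^2 := by rcases lt_or_gt_of_ne hB0 with h|h <;> nlinarith
    set ε := min (t0 / |B|) (1/(C+1)) with hε
    have hC1 : (0:ℝ) < C + 1 := by linarith
    have hεpos : 0 < ε := lt_min (div_pos ht0 habs) (one_div_pos.mpr hC1)
    have hεC : ε * C ≤ 1 := by
      have h1 : ε ≤ 1/(C+1) := min_le_right _ _
      have h3 : ε * C ≤ (1/(C+1)) * C := mul_le_mul_of_nonneg_right h1 hCnn
      have h4 : (1/(C+1)) * C ≤ 1 := by
        rw [one_div, inv_mul_le_iff₀ hC1]; linarith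
      exact le_trans h3 h4
    have htle : |(-(ε*B))| ≤ t0 := by
      rw [abs_neg, abs_mul, abs_of_pos hεpos]
      have h1 : ε ≤ t0 / |B| := min_le_left _ _
      calc ε * |B| ≤ (t0/|B|) * |B| := mul_le_mul_of_nonneg_right h1 (abs_nonneg _)
        _ = t0 := by field_simp
    have k := key (-(ε*B)) (hfeas _ htle)
    nlinarith [k, mul_nonneg (mul_nonneg hεpos.le (sq_nonneg B)) (sub_nonneg.mpr hεC),
      mul_pos hεpos hBB]
  exact ⟨hB0, by linarith [hCnn]⟩


set_option maxHeartbeats 2000000 in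
lemma interior_contra {n : ℕ} (hn : 0 < n) (ρ : ℝ) (hρ : 0 < ρ)
    (x : Fin n → ℝ) (hnonneg : ∀ i, 0 ≤ x i) (hx0 : x ≠ 0)
    (hnotmult : ∀ c : ℝ, x ≠ fun _ => c)
    (Δ αlo : ℝ)
    (hΔ : Δ = ((ρ / 2) * (∑ i, (x i) ^ 2) + n) ^ 2 - 2 * ρ * (∑ i, |x i|) ^ 2)
    (hαlo : αlo = ((ρ / 2) * (∑ i, (x i) ^ 2) + n) - Real.sqrt Δ)
    (hlast : x ⟨n - 1, Nat.sub_lt hn Nat.one_pos⟩ ≤ αlo / (ρ * ∑ j, |x j|))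
    (w : Fin n → ℝ) (hw1 : ∑ i, (w i)^2 = 1) (hpos : ∀ i, 0 < w i)
    (hmin : ∀ v : Fin n → ℝ, (∑ i, (v i)^2 = 1) → (∀ i, 0 ≤ v i) →
       (∑ i, w i)^2 - (ρ/2)*(∑ i, x i * w i)^2
         ≤ (∑ i, v i)^2 - (ρ/2)*(∑ i, x i * v i)^2) : False := by
  haveI : NeZero n := ⟨hn.ne'⟩
  have habs : (∑ i, |x i|) = ∑ i, x i :=
    Finset.sum_congr rfl fun i _ => abs_of_nonneg (hnonneg i)
  rw [habs] at hΔ hlast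
  set L1 := ∑ i, x i with hL1
  set Q := ∑ i, (x i)^2 with hQ
  set S := ∑ i, w i with hSdef
  set P := ∑ i, x i * w i with hPdef
  -- basic positivity
  have hxne : ∃ i, x i ≠ 0 := by
    by_contra h; push_neg at h; exact hx0 (funext h)
  have hL1pos : 0 < L1 := by
    obtain ⟨i, hi⟩ := hxne
    have h1 : 0 < x i := lt_of_le_of_ne (hnonneg i) (Ne.symm hi)
    rw [hL1]
    exact lt_of_lt_of_le h1 (Finset.single_le_sum (fun j _ => hnonneg j) (Finset.mem_univ i))
  have hQpos : 0 < Q := by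
    obtain ⟨i, hi⟩ := hxne
    have h1 : 0 < (x i)^2 := by rcases hi.lt_or_gt with h|h <;> nlinarith
    rw [hQ]
    exact lt_of_lt_of_le h1 (Finset.single_le_sum (fun j _ => sq_nonneg (x j)) (Finset.mem_univ i))
  have hS1 : 1 ≤ S := by
    rw [hSdef, ← hw1]
    refine Finset.sum_le_sum fun i _ => ?_
    have h2 : (w i)^2 ≤ 1 := by
      rw [← hw1]
      exact Finset.single_le_sum (fun j (_ : j ∈ Finset.univ) => sq_nonneg (w j))
        (Finset.mem_univ i)
    nlinarith [hpos i]
  have hPnn : 0 ≤ P := by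
    rw [hPdef]
    exact Finset.sum_nonneg fun i _ => mul_nonneg (hnonneg i) (hpos i).le
  rw [hSdef, hPdef] at hmin
  clear_value L1 Q S P
  -- Step A : KKT condition
  have hKKT : ∀ i, 2*S - ρ*P*(x i) = (2*S^2 - ρ*P^2) * w i := by
    set d : Fin n → ℝ := fun i => 2*S - ρ*P*(x i) - (2*S^2 - ρ*P^2)*(w i) with hd
    clear_value d
    have hdw : ∑ i, d i * w i = 0 := by
      have e : ∑ i, d i * w i
          = (2*S) * (∑ i, w i) + (-(ρ*P)) * (∑ i, x i * w i)
            + (-(2*S^2 - ρ*P^2)) * (∑ i, (w i)^2) :=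
        sum_comb _ _ _ _ _ _ _ (fun i => by simp only [hd]; ring)
      rw [e, hw1, ← hSdef, ← hPdef]; ring
    obtain ⟨hB, -⟩ := perturb ρ x w d hw1 hpos hmin hdw
    have e2 : ∑ i, (d i)^2
        = (2*S) * (∑ i, d i) + (-(ρ*P)) * (∑ i, x i * d i)
          + (-(2*S^2 - ρ*P^2)) * (∑ i, d i * w i) :=
      sum_comb _ _ _ _ _ _ _ (fun i => by simp only [hd]; ring)
    rw [← hSdef, ← hPdef] at hB
    have hzero : ∑ i, (d i)^2 = 0 := by
      rw [e2, hdw]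
      linear_combination 2*hB
    have hz := (Finset.sum_eq_zero_iff_of_nonneg (fun i _ => sq_nonneg (d i))).mp hzero
    intro i
    have hdi : d i = 0 := sq_eq_zero_iff.mp (hz i (Finset.mem_univ i))
    have hdi2 : d i = 2*S - ρ*P*(x i) - (2*S^2 - ρ*P^2)*(w i) := by simp only [hd]
    linarith [hdi, hdi2.symm.trans hdi]
  -- summed equations
  have E1 : 2*S*(n:ℝ) - ρ*P*L1 = (2*S^2 - ρ*P^2)*S := by
    have e3 : ∑ i, ((2*S^2 - ρ*P^2)*w i)
        = (2*S) * (∑ _i : Fin n, (1:ℝ)) + (-(ρ*P)) * (∑ i, x i) + 0 * (∑ i, x i) :=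
      sum_comb _ _ _ _ _ _ _ (fun i => by rw [← hKKT i]; ring)
    have e4 : ∑ i, ((2*S^2 - ρ*P^2)*w i) = (2*S^2 - ρ*P^2) * (∑ i, w i) :=
      (Finset.mul_sum _ _ _).symm
    rw [sum_one, ← hL1] at e3
    rw [← hSdef] at e4
    linear_combination e4 - e3
  have E2 : 2*S*L1 - ρ*P*Q = (2*S^2 - ρ*P^2)*P := by
    have e3 : ∑ i, (x i * ((2*S^2 - ρ*P^2)*w i))
        = (2*S) * (∑ i, x i) + (-(ρ*P)) * (∑ i, (x i)^2) + 0 * (∑ i, x i) :=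
      sum_comb _ _ _ _ _ _ _ (fun i => by rw [← hKKT i]; ring)
    have e4 : ∑ i, (x i * ((2*S^2 - ρ*P^2)*w i)) = (2*S^2 - ρ*P^2) * (∑ i, x i * w i) := by
      rw [Finset.mul_sum]
      exact Finset.sum_congr rfl fun i _ => by ring
    rw [← hL1, ← hQ] at e3
    rw [← hPdef] at e4
    linear_combination e4 - e3
  have hPpos : 0 < P := by
    rcases eq_or_lt_of_le hPnn with h|h
    · exfalso; rw [← h] at E2; nlinarith [hL1pos, hS1]
    · exact h
  -- Step C : second-order condition with u = S x - P e
  have hsec2 : 2*(2*S^2 - ρ*P^2) + ρ*Q ≤ 2*(n:ℝ) := by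
    set u : Fin n → ℝ := fun i => S * x i - P with hu
    clear_value u
    have huw : ∑ i, u i * w i = 0 := by
      have e : ∑ i, u i * w i
          = S * (∑ i, x i * w i) + (-P) * (∑ i, w i) + 0 * (∑ i, w i) :=
        sum_comb _ _ _ _ _ _ _ (fun i => by simp only [hu]; ring)
      rw [e, ← hSdef, ← hPdef]; ring
    obtain ⟨-, hsec⟩ := perturb ρ x w u hw1 hpos hmin huw
    have hSu : ∑ i, u i = S*L1 - P*(n:ℝ) := by
      have e : ∑ i, u i = S * (∑ i, x i) + (-P) * (∑ _i : Fin n, (1:ℝ)) + 0 * (∑ i, x i) :=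
        sum_comb _ _ _ _ _ _ _ (fun i => by simp only [hu]; ring)
      rw [e, sum_one, ← hL1]; ring
    have hPu : ∑ i, x i * u i = S*Q - P*L1 := by
      have e : ∑ i, x i * u i
          = S * (∑ i, (x i)^2) + (-P) * (∑ i, x i) + 0 * (∑ i, x i) :=
        sum_comb _ _ _ _ _ _ _ (fun i => by simp only [hu]; ring)
      rw [e, ← hL1, ← hQ]; ring
    have hU2 : ∑ i, (u i)^2 = S^2*Q - 2*S*P*L1 + P^2*(n:ℝ) := by
      have e : ∑ i, (u i)^2
          = (S^2) * (∑ i, (x i)^2) + (-(2*S*P)) * (∑ i, x i) + (P^2) * (∑ _i : Fin n, (1:ℝ)) :=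
        sum_comb _ _ _ _ _ _ _ (fun i => by simp only [hu]; ring)
      rw [e, sum_one, ← hL1, ← hQ]; ring
    have hU2pos : 0 < S^2*Q - 2*S*P*L1 + P^2*(n:ℝ) := by
      rw [← hU2]
      rcases eq_or_lt_of_le (Finset.sum_nonneg fun i _ => sq_nonneg (u i)) with h|h
      · exfalso
        have hz := (Finset.sum_eq_zero_iff_of_nonneg (fun i _ => sq_nonneg (u i))).mp h.symm
        have hSpos : 0 < S := lt_of_lt_of_le one_pos hS1
        apply hnotmult (P/S)
        funext i
        have h1 : u i = 0 := sq_eq_zero_iff.mp (hz i (Finset.mem_univ i))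
        have h2 : S * x i - P = 0 := by simp only [hu] at h1; exact h1
        field_simp
        linarith
      · exact h
    rw [hSu, hPu, hU2, ← hSdef, ← hPdef] at hsec
    have hmu : 2*((S*L1 - P*(n:ℝ))^2 - (ρ/2)*(S*Q - P*L1)^2)
        = (2*(n:ℝ) - ρ*Q - (2*S^2 - ρ*P^2))*(S^2*Q - 2*S*P*L1 + P^2*(n:ℝ)) := by
      linear_combination (S*L1 - P*(n:ℝ))*E2 - (S*Q - P*L1)*E1
    have hgap : 0 ≤ (2*(n:ℝ) - ρ*Q - 2*(2*S^2 - ρ*P^2))*(S^2*Q - 2*S*P*L1 + P^2*(n:ℝ)) := by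
      linarith [hsec, hmu]
    by_contra hcon
    push_neg at hcon
    have hpos' : 0 < 2*(2*S^2 - ρ*P^2) + ρ*Q - 2*(n:ℝ) := by linarith
    linarith [mul_pos hpos' hU2pos, hgap]
  -- Step D : identify αlo
  have hSpos : 0 < S := lt_of_lt_of_le one_pos hS1
  have hkey : (2*(n:ℝ) - (2*S^2 - ρ*P^2))*((2*S^2 - ρ*P^2) + ρ*Q) = 2*ρ*L1^2 := by
    have h2 : ((2*(n:ℝ) - (2*S^2 - ρ*P^2))*((2*S^2 - ρ*P^2) + ρ*Q)) * (S*P)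
        = (2*ρ*L1^2) * (S*P) := by
      linear_combination (((2*S^2 - ρ*P^2) + ρ*Q)*P)*E1 - (ρ*P*L1)*E2
    exact mul_right_cancel₀ (ne_of_gt (mul_pos hSpos hPpos)) h2
  have hΔeq : Δ = (((ρ/2)*Q + (n:ℝ)) - ((2*S^2 - ρ*P^2) + ρ*Q))^2 := by
    rw [hΔ]; linear_combination hkey
  have hαle : (2*S^2 - ρ*P^2) + ρ*Q ≤ (ρ/2)*Q + (n:ℝ) := by linarith [hsec2]
  have hsqrtΔ : Real.sqrt Δ = ((ρ/2)*Q + (n:ℝ)) - ((2*S^2 - ρ*P^2) + ρ*Q) := by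
    rw [hΔeq, Real.sqrt_sq (by linarith)]
  have hαlo_eq : αlo = (2*S^2 - ρ*P^2) + ρ*Q := by rw [hαlo, hsqrtΔ]; ring
  -- Step E : strict Cauchy-Schwarz, negativity of lam
  have hCS : L1^2 < (n:ℝ)*Q := by
    obtain ⟨j, hj⟩ : ∃ j, x j ≠ x ⟨0, hn⟩ := by
      by_contra h; push_neg at h; exact hnotmult (x ⟨0, hn⟩) (funext h)
    have step1 : ∀ i : Fin n, ∑ k, (x i - x k)^2 = (n:ℝ)*(x i)^2 - (2*L1)*(x i) + Q := by
      intro i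
      have e : ∑ k, (x i - x k)^2
          = ((x i)^2) * (∑ _k : Fin n, (1:ℝ)) + (-(2*(x i))) * (∑ k, x k)
            + 1 * (∑ k, (x k)^2) :=
        sum_comb _ _ _ _ _ _ _ (fun k => by ring)
      rw [e, sum_one, ← hL1, ← hQ]; ring
    have step2 : ∑ i, ∑ k, (x i - x k)^2 = 2*((n:ℝ)*Q - L1^2) := by
      have e : ∑ i, ∑ k, (x i - x k)^2
          = ((n:ℝ)) * (∑ i, (x i)^2) + (-(2*L1)) * (∑ i, x i) + Q * (∑ _i : Fin n, (1:ℝ)) :=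
        sum_comb _ _ _ _ _ _ _ (fun i => by rw [step1 i]; ring)
      rw [e, sum_one, ← hL1, ← hQ]; ring
    have h0 : 0 < (x j - x ⟨0, hn⟩)^2 := by
      have h' := sub_ne_zero.mpr hj
      rcases h'.lt_or_gt with h|h <;> nlinarith
    have t1 : (x j - x ⟨0, hn⟩)^2 ≤ ∑ k, (x j - x k)^2 :=
      Finset.single_le_sum (f := fun k => (x j - x k)^2) (fun k _ => sq_nonneg _)
        (Finset.mem_univ (⟨0, hn⟩ : Fin n))
    have t2 : ∑ k, (x j - x k)^2 ≤ ∑ i, ∑ k, (x i - x k)^2 :=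
      Finset.single_le_sum (f := fun i => ∑ k, (x i - x k)^2) (fun i _ =>
        Finset.sum_nonneg fun k _ => sq_nonneg _) (Finset.mem_univ j)
    nlinarith [step2, h0, t1, t2]
  have hlamneg : 2*S^2 - ρ*P^2 < 0 := by
    by_contra hcon
    push_neg at hcon
    have hA : 0 ≤ ((ρ/2)*Q + (n:ℝ)) - ((2*S^2 - ρ*P^2) + ρ*Q) := by linarith
    have hAb : ((ρ/2)*Q + (n:ℝ)) - ((2*S^2 - ρ*P^2) + ρ*Q) ≤ (n:ℝ) - (ρ/2)*Q := by linarith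
    have hA2 : (((ρ/2)*Q + (n:ℝ)) - ((2*S^2 - ρ*P^2) + ρ*Q))^2
        = ((ρ/2)*Q + (n:ℝ))^2 - 2*ρ*L1^2 := by rw [← hΔeq, hΔ]
    nlinarith [hA2, mul_self_le_mul_self hA hAb, mul_lt_mul_of_pos_left hCS hρ]
  -- Step F : contradiction at the last coordinate
  have hK := hKKT ⟨n - 1, Nat.sub_lt hn Nat.one_pos⟩
  have h1 : ρ*P*(x ⟨n - 1, Nat.sub_lt hn Nat.one_pos⟩) ≤ ρ*P*(αlo/(ρ*L1)) :=
    mul_le_mul_of_nonneg_left hlast (mul_pos hρ hPpos).le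
  have h2 : ρ*P*(αlo/(ρ*L1)) = 2*S := by
    rw [hαlo_eq]
    have hρ' : ρ ≠ 0 := hρ.ne'
    have hL1' : L1 ≠ 0 := hL1pos.ne'
    field_simp
    linear_combination (-1)*E2
  have h4 : (2*S^2 - ρ*P^2) * w ⟨n - 1, Nat.sub_lt hn Nat.one_pos⟩ < 0 :=
    mul_neg_of_neg_of_pos hlamneg (hpos _)
  rw [h2] at h1
  linarith [hK, h1, h4]


theorem stmt_9 {n : ℕ} (hn : 0 < n) (ρ : ℝ) (hρ : 0 < ρ)
    (x : Fin n → ℝ) (hdesc : ∀ i j : Fin n, i ≤ j → x j ≤ x i)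
    (hnonneg : ∀ i, 0 ≤ x i) (hx0 : x ≠ 0) (hnotmult : ∀ c : ℝ, x ≠ fun _ => c)
    (Δ αlo : ℝ)
    (hΔ : Δ = ((ρ / 2) * (∑ i, (x i) ^ 2) + n) ^ 2 - 2 * ρ * (∑ i, |x i|) ^ 2)
    (hαlo : αlo = ((ρ / 2) * (∑ i, (x i) ^ 2) + n) - Real.sqrt Δ)
    (hlast : x ⟨n - 1, Nat.sub_lt hn Nat.one_pos⟩ ≤ αlo / (ρ * ∑ j, |x j|)) :
    (∀ w : Fin n → ℝ, (∑ i, (w i) ^ 2 = 1) → (∀ i, 0 ≤ w i) →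
      (∀ v : Fin n → ℝ, (∑ i, (v i) ^ 2 = 1) → (∀ i, 0 ≤ v i) →
        (1 / 2) * ∑ i, ∑ j, (2 - ρ * x i * x j) * w i * w j ≤
          (1 / 2) * ∑ i, ∑ j, (2 - ρ * x i * x j) * v i * v j) →
      ∃ i, w i = 0) ∧
    (∃ w : Fin n → ℝ, (∑ i, (w i) ^ 2 = 1) ∧ (∀ i, 0 ≤ w i) ∧
      (∀ v : Fin n → ℝ, (∑ i, (v i) ^ 2 = 1) → (∀ i, 0 ≤ v i) →
        (1 / 2) * ∑ i, ∑ j, (2 - ρ * x i * x j) * w i * w j ≤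
          (1 / 2) * ∑ i, ∑ j, (2 - ρ * x i * x j) * v i * v j) ∧
      w ⟨n - 1, Nat.sub_lt hn Nat.one_pos⟩ = 0) := by
  haveI : NeZero n := ⟨hn.ne'⟩
  -- part A in f-form
  have partA : ∀ w : Fin n → ℝ, (∑ i, (w i)^2 = 1) → (∀ i, 0 ≤ w i) →
      (∀ v : Fin n → ℝ, (∑ i, (v i)^2 = 1) → (∀ i, 0 ≤ v i) →
        (∑ i, w i)^2 - (ρ/2)*(∑ i, x i * w i)^2
          ≤ (∑ i, v i)^2 - (ρ/2)*(∑ i, x i * v i)^2) → ∃ i, w i = 0 := by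
    intro w hw1 hwnn hwmin
    by_contra h
    push_neg at h
    have hpos : ∀ i, 0 < w i := fun i => lt_of_le_of_ne (hwnn i) (Ne.symm (h i))
    exact interior_contra hn ρ hρ x hnonneg hx0 hnotmult Δ αlo hΔ hαlo hlast w hw1 hpos hwmin
  -- existence of a global minimizer
  have hexists : ∃ w₀ : Fin n → ℝ, (∑ i, (w₀ i)^2 = 1) ∧ (∀ i, 0 ≤ w₀ i) ∧
      (∀ v : Fin n → ℝ, (∑ i, (v i)^2 = 1) → (∀ i, 0 ≤ v i) →
        (∑ i, w₀ i)^2 - (ρ/2)*(∑ i, x i * w₀ i)^2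
          ≤ (∑ i, v i)^2 - (ρ/2)*(∑ i, x i * v i)^2) := by
    set K : Set (Fin n → ℝ) := {w | (∑ i, (w i)^2 = 1) ∧ ∀ i, 0 ≤ w i} with hK
    have hclosed : IsClosed K := by
      have h1 : IsClosed {w : Fin n → ℝ | ∑ i, (w i)^2 = 1} :=
        isClosed_eq (by fun_prop) continuous_const
      have h2 : IsClosed {w : Fin n → ℝ | ∀ i, 0 ≤ w i} := by
        have e : {w : Fin n → ℝ | ∀ i, 0 ≤ w i} = ⋂ i, {w : Fin n → ℝ | 0 ≤ w i} := by
          ext w; simp [Set.mem_iInter]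
        rw [e]
        exact isClosed_iInter fun i => isClosed_le continuous_const (continuous_apply i)
      exact h1.inter h2
    have hsub : K ⊆ Metric.closedBall 0 1 := by
      intro w hw
      rw [Metric.mem_closedBall, dist_zero_right]
      rw [pi_norm_le_iff_of_nonneg (by norm_num)]
      intro i
      have h2 : (w i)^2 ≤ 1 := by
        rw [← hw.1]
        exact Finset.single_le_sum (fun j (_ : j ∈ Finset.univ) => sq_nonneg (w j))
          (Finset.mem_univ i)
      rw [Real.norm_eq_abs, abs_le]
      constructor <;> nlinarith [hw.2 i]
    have hKc : IsCompact K :=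
      (isCompact_closedBall (0 : Fin n → ℝ) 1).of_isClosed_subset hclosed hsub
    have hKne : K.Nonempty := by
      refine ⟨(fun i => if i = ⟨0, hn⟩ then 1 else 0), ?_, ?_⟩
      · show ∑ i, (if i = (⟨0, hn⟩ : Fin n) then (1:ℝ) else 0)^2 = 1; rw [Finset.sum_eq_single (⟨0, hn⟩ : Fin n) (fun b _ hb => by rw [if_neg hb]; norm_num) (fun h => absurd (Finset.mem_univ _) h), if_pos rfl]; norm_num
      · intro i; dsimp only; split <;> norm_num
    have hfc : ContinuousOn (fun w : Fin n → ℝ =>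
        (∑ i, w i)^2 - (ρ/2)*(∑ i, x i * w i)^2) K :=
      Continuous.continuousOn (by fun_prop)
    obtain ⟨w₀, hw₀K, hmin₀⟩ := hKc.exists_isMinOn hKne hfc
    exact ⟨w₀, hw₀K.1, hw₀K.2, fun v hv1 hvnn => hmin₀ (Set.mem_setOf.mpr ⟨hv1, hvnn⟩)⟩
  obtain ⟨w₀, hw₀1, hw₀nn, hw₀min⟩ := hexists
  constructor
  · -- part (a)
    intro w hw1 hwnn hwmin
    refine partA w hw1 hwnn fun v hv1 hvnn => ?_
    have h := hwmin v hv1 hvnn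
    rw [objconv ρ x w, objconv ρ x v] at h
    exact h
  · -- part (b)
    have key : ∃ w : Fin n → ℝ, (∑ i, (w i)^2 = 1) ∧ (∀ i, 0 ≤ w i) ∧
        (∀ v : Fin n → ℝ, (∑ i, (v i)^2 = 1) → (∀ i, 0 ≤ v i) →
          (∑ i, w i)^2 - (ρ/2)*(∑ i, x i * w i)^2
            ≤ (∑ i, v i)^2 - (ρ/2)*(∑ i, x i * v i)^2) ∧
        w ⟨n - 1, Nat.sub_lt hn Nat.one_pos⟩ = 0 := by
      set iL : Fin n := ⟨n - 1, Nat.sub_lt hn Nat.one_pos⟩ with hiL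
      by_cases hz : w₀ iL = 0
      · exact ⟨w₀, hw₀1, hw₀nn, hw₀min, hz⟩
      · obtain ⟨i, hi0⟩ := partA w₀ hw₀1 hw₀nn hw₀min
        have hne : i ≠ iL := fun h => hz (h ▸ hi0)
        set σ := Equiv.swap i iL with hσ
        refine ⟨fun j => w₀ (σ j), ?_, ?_, ?_, ?_⟩
        · exact Equiv.sum_comp σ (fun j => (w₀ j)^2) ▸ hw₀1
        · exact fun j => hw₀nn (σ j)
        · intro v hv1 hvnn
          refine le_trans ?_ (hw₀min v hv1 hvnn)
          have hSe : ∑ j, w₀ (σ j) = ∑ j, w₀ j := Equiv.sum_comp σ w₀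
          have hPe : ∑ j, x j * w₀ (σ j)
              = ∑ j, x j * w₀ j + (x i - x iL) * w₀ iL := by
            have hpt : ∀ j, x j * w₀ (σ j)
                = x j * w₀ j + (if j = i then x i * w₀ iL - x i * w₀ i else 0)
                  + (if j = iL then x iL * w₀ i - x iL * w₀ iL else 0) := by
              intro j
              by_cases h1 : j = i
              · subst h1
                rw [if_pos rfl, if_neg hne, hσ, Equiv.swap_apply_left]
                ring
              · by_cases h2 : j = iL
                · subst h2
                  rw [if_neg h1, if_pos rfl, hσ, Equiv.swap_apply_right]
                  ring
                · rw [if_neg h1, if_neg h2, hσ, Equiv.swap_apply_of_ne_of_ne h1 h2]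
                  ring
            rw [Finset.sum_congr rfl fun j _ => hpt j, Finset.sum_add_distrib,
              Finset.sum_add_distrib, Finset.sum_ite_eq' Finset.univ i,
              Finset.sum_ite_eq' Finset.univ iL, if_pos (Finset.mem_univ i),
              if_pos (Finset.mem_univ iL), hi0]
            ring
          rw [hSe, hPe]
          have hxle : x iL ≤ x i := hdesc i iL (by
            rw [hiL, Fin.le_def]; show i.val ≤ n - 1; omega)
          have hPnn : 0 ≤ ∑ j, x j * w₀ j :=
            Finset.sum_nonneg fun j _ => mul_nonneg (hnonneg j) (hw₀nn j)
          have hwnn' := hw₀nn iL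
          have hδ : 0 ≤ (x i - x iL) * w₀ iL := mul_nonneg (sub_nonneg.mpr hxle) hwnn'
          nlinarith [hρ, hPnn, hδ, mul_nonneg hPnn hδ, sq_nonneg ((x i - x iL) * w₀ iL)]
        · show w₀ (σ iL) = 0
          rw [hσ, Equiv.swap_apply_right]
          exact hi0
    obtain ⟨w, h1, h2, h3, h4⟩ := key
    refine ⟨w, h1, h2, fun v hv1 hvnn => ?_, h4⟩
    rw [objconv ρ x w, objconv ρ x v]
    exact h3 v hv1 hvnn
end

section
/- Let ρ > 0, x ∈ ℝⁿ₊, and A = −ρxx^⊤, and consider the problem min{½wᵀAw + eᵀw : w ∈ ℝⁿ, ‖w‖₂ = 1}. A unit vector w* is a global solution of this problem if and only if there exists a real number λ* > ρ‖x‖₂² such that (A + λ*I)w* = −e. Moreover, such a λ* is unique. -/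
lemma mulvec_iff {n : ℕ} (ρ : ℝ) (x : Fin n → ℝ)
    (A : Matrix (Fin n) (Fin n) ℝ) (hA : ∀ i j, A i j = -(ρ * x i * x j))
    (lam : ℝ) (w : Fin n → ℝ) :
    (A + lam • (1 : Matrix (Fin n) (Fin n) ℝ)).mulVec w = (fun _ => -1) ↔
      ∀ i, lam * w i - ρ * (∑ j, x j * w j) * x i = -1 := by
  rw [funext_iff]
  apply forall_congr'
  intro i
  have h1 : (A + lam • (1 : Matrix (Fin n) (Fin n) ℝ)).mulVec w i
      = (∑ j, A i j * w j) + lam * w i := by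
    simp [Matrix.mulVec, dotProduct, Matrix.one_apply, add_mul, mul_ite,
      Finset.sum_add_distrib, mul_assoc]
  have h2 : ∑ j, A i j * w j = -(ρ * (∑ j, x j * w j) * x i) := by
    calc ∑ j, A i j * w j = ∑ j, (-(ρ * x i)) * (x j * w j) := by
          apply Finset.sum_congr rfl; intro j _; rw [hA]; ring
      _ = (-(ρ * x i)) * ∑ j, x j * w j := (Finset.mul_sum _ _ _).symm
      _ = -(ρ * (∑ j, x j * w j) * x i) := by ring
  rw [h1, h2]
  constructor <;> intro h <;> linarith

lemma quad_eq {n : ℕ} (ρ : ℝ) (x : Fin n → ℝ)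
    (A : Matrix (Fin n) (Fin n) ℝ) (hA : ∀ i j, A i j = -(ρ * x i * x j))
    (w : Fin n → ℝ) :
    ∑ i, ∑ j, A i j * w i * w j = -(ρ * (∑ i, x i * w i)^2) := by
  calc ∑ i, ∑ j, A i j * w i * w j
      = ∑ i, (-ρ * (x i * w i)) * (∑ j, x j * w j) := by
        apply Finset.sum_congr rfl; intro i _
        rw [Finset.mul_sum]
        apply Finset.sum_congr rfl; intro j _; rw [hA]; ring
    _ = (∑ i, -ρ * (x i * w i)) * (∑ j, x j * w j) := (Finset.sum_mul _ _ _).symm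
    _ = -(ρ * (∑ i, x i * w i)^2) := by rw [← Finset.mul_sum]; ring

lemma key_strict {n : ℕ} (ρ : ℝ) (hρ : 0 < ρ) (x : Fin n → ℝ) (lam : ℝ)
    (hlam : ρ * (∑ i, (x i)^2) < lam)
    (w0 : Fin n → ℝ) (h0 : ∑ i, (w0 i)^2 = 1)
    (hC : ∀ i, lam * w0 i - ρ * (∑ j, x j * w0 j) * x i = -1)
    (w : Fin n → ℝ) (hw : ∑ i, (w i)^2 = 1) (hne : w ≠ w0) :
    (1/2) * (-(ρ * (∑ i, x i * w0 i)^2)) + ∑ i, w0 i <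
      (1/2) * (-(ρ * (∑ i, x i * w i)^2)) + ∑ i, w i := by
  have hgen : ∀ v : Fin n → ℝ,
      lam * (∑ i, v i * w0 i) - ρ * (∑ i, x i * w0 i) * (∑ i, x i * v i)
        = -(∑ i, v i) := by
    intro v
    calc lam * (∑ i, v i * w0 i) - ρ * (∑ i, x i * w0 i) * (∑ i, x i * v i)
        = ∑ i, (lam * w0 i - ρ * (∑ j, x j * w0 j) * x i) * v i := by
          rw [Finset.mul_sum, Finset.mul_sum, ← Finset.sum_sub_distrib]
          apply Finset.sum_congr rfl; intro i _; ring
      _ = ∑ i, (-1 : ℝ) * v i := Finset.sum_congr rfl fun i _ => by rw [hC i]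
      _ = -(∑ i, v i) := by simp
  have hww : ∑ i, w0 i * w0 i = 1 := by
    rw [← h0]; apply Finset.sum_congr rfl; intro i _; ring
  have h1 := hgen w
  have h2 := hgen w0
  rw [hww] at h2
  have dd : ∑ i, (w i - w0 i)^2 = 2 - 2 * ∑ i, w i * w0 i := by
    have e : ∀ i, (w i - w0 i)^2 = (w i)^2 - 2 * (w i * w0 i) + (w0 i)^2 :=
      fun i => by ring
    rw [Finset.sum_congr rfl fun i _ => e i, Finset.sum_add_distrib,
      Finset.sum_sub_distrib, ← Finset.mul_sum, hw, h0]
    ring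
  have exd : ∑ i, x i * (w i - w0 i) = (∑ i, x i * w i) - ∑ i, x i * w0 i := by
    rw [← Finset.sum_sub_distrib]
    apply Finset.sum_congr rfl; intro i _; ring
  have cs : (∑ i, x i * (w i - w0 i))^2
      ≤ (∑ i, (x i)^2) * ∑ i, (w i - w0 i)^2 :=
    Finset.sum_mul_sq_le_sq_mul_sq _ _ _
  rw [exd] at cs
  have hD0 : 0 ≤ ∑ i, (w i - w0 i)^2 := Finset.sum_nonneg fun i _ => sq_nonneg _
  have hDpos : 0 < ∑ i, (w i - w0 i)^2 := by
    obtain ⟨i, hi⟩ : ∃ i, w i ≠ w0 i := by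
      by_contra h; push_neg at h; exact hne (funext h)
    have h1' : (0:ℝ) < (w i - w0 i)^2 :=
      lt_of_le_of_ne (sq_nonneg _) (Ne.symm (pow_ne_zero 2 (sub_ne_zero.2 hi)))
    exact lt_of_lt_of_le h1' (Finset.single_le_sum
      (f := fun j => (w j - w0 j)^2) (fun j _ => sq_nonneg _) (Finset.mem_univ i))
  have c1 : ρ * ((∑ i, x i * w i - ∑ i, x i * w0 i)^2)
      ≤ ρ * ((∑ i, (x i)^2) * ∑ i, (w i - w0 i)^2) :=
    mul_le_mul_of_nonneg_left cs hρ.le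
  have c2 : ρ * (∑ i, (x i)^2) * (∑ i, (w i - w0 i)^2)
      < lam * (∑ i, (w i - w0 i)^2) :=
    mul_lt_mul_of_pos_right hlam hDpos
  have dd' : lam * ∑ i, (w i - w0 i)^2 = lam * (2 - 2 * ∑ i, w i * w0 i) := by
    rw [dd]
  nlinarith [c1, c2, h1, h2, dd']

set_option maxHeartbeats 1000000 in
lemma exists_pair {n : ℕ} (hn : 0 < n) (ρ : ℝ) (hρ : 0 < ρ)
    (x : Fin n → ℝ) (hx : ∀ i, 0 ≤ x i) :
    ∃ lam : ℝ, ∃ w0 : Fin n → ℝ, ρ * (∑ i, (x i)^2) < lam ∧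
      (∑ i, (w0 i)^2 = 1) ∧
      ∀ i, lam * w0 i - ρ * (∑ j, x j * w0 j) * x i = -1 := by
  by_cases hx0 : ∀ i, x i = 0
  · -- x = 0 case
    have hX : ∑ i, (x i)^2 = 0 := by simp [hx0]
    have hn' : (0:ℝ) < n := by exact_mod_cast hn
    refine ⟨Real.sqrt n, fun _ => -1 / Real.sqrt n, ?_, ?_, ?_⟩
    · rw [hX]; simpa using Real.sqrt_pos.2 hn'
    · have h1 : (-1 / Real.sqrt n)^2 = 1 / n := by
        rw [div_pow, Real.sq_sqrt hn'.le]; norm_num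
      rw [Finset.sum_congr rfl fun i _ => h1, Finset.sum_const]
      simp [Finset.card_univ]
      field_simp
    · intro i
      rw [hx0 i]
      have : Real.sqrt n ≠ 0 := ne_of_gt (Real.sqrt_pos.2 hn')
      field_simp
      simp
  · -- x ≠ 0 case
    push_neg at hx0
    obtain ⟨i0, hi0⟩ := hx0
    have hxi0 : 0 < x i0 := lt_of_le_of_ne (hx i0) (Ne.symm hi0)
    set X : ℝ := ∑ i, (x i)^2 with hXdef
    set σ : ℝ := ∑ i, x i with hσdef
    have hX : 0 < X := by
      refine lt_of_lt_of_le (by positivity : (0:ℝ) < x i0 ^ 2) ?_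
      exact Finset.single_le_sum (f := fun i => (x i)^2) (fun j _ => sq_nonneg _)
        (Finset.mem_univ i0)
    have hσ : 0 < σ := by
      refine lt_of_lt_of_le hxi0 ?_
      exact Finset.single_le_sum (fun j _ => hx j) (Finset.mem_univ i0)
    set μ : ℝ := ρ * X with hμdef
    have hμ : 0 < μ := by positivity
    set g : ℝ → ℝ := fun lam =>
      ρ^2 * X * (σ/(lam - μ))^2 + 2*ρ*σ*(σ/(lam - μ)) + ((n:ℝ) - lam^2) with hgdef
    set K : ℝ := ρ^2*σ^2*X/(μ+1)^2 with hKdef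
    have hK : 0 < K := by positivity
    set ε : ℝ := min 1 (K/(K+1)) with hεdef
    have hε0 : 0 < ε := lt_min one_pos (by positivity)
    have hε1 : ε ≤ 1 := min_le_left _ _
    have hεK : ε < K := by
      have h2 : ε ≤ K/(K+1) := min_le_right _ _
      have h3 : K/(K+1) < K := by
        rw [div_lt_iff₀ (by positivity)]
        nlinarith
      linarith
    set a : ℝ := μ + ε with hadef
    set C : ℝ := ρ^2*σ^2*X + 2*ρ*σ^2 + n with hCdef
    set b : ℝ := μ + 1 + C with hbdef
    have hC0 : 0 ≤ C := by positivity
    have hab : a ≤ b := by simp only [hadef, hbdef]; linarith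
    have hμa : μ < a := by simp only [hadef]; linarith
    -- g a > 0
    have hga : 0 < g a := by
      have haμ : a - μ = ε := by simp only [hadef]; ring
      have e1 : ρ^2 * X * (σ/ε)^2 = (ρ^2*σ^2*X)/(ε^2) := by
        rw [div_pow]; ring
      have key1 : (μ+ε)^2 * ε^2 < ρ^2*σ^2*X := by
        have hA : (μ+ε)^2 ≤ (μ+1)^2 := by nlinarith
        have hB : (μ+ε)^2 * ε^2 ≤ (μ+1)^2 * ε^2 :=
          mul_le_mul_of_nonneg_right hA (sq_nonneg ε)
        have h4 : ε^2 ≤ ε := by nlinarith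
        have h5 : ε * (μ+1)^2 < ρ^2*σ^2*X := by
          have hKe : K * (μ+1)^2 = ρ^2*σ^2*X := by
            rw [hKdef, div_mul_cancel₀ _ (by positivity : ((μ:ℝ)+1)^2 ≠ 0)]
          calc ε * (μ+1)^2 < K * (μ+1)^2 :=
                mul_lt_mul_of_pos_right hεK (by positivity)
            _ = ρ^2*σ^2*X := hKe
        have h4' : (μ+1)^2 * ε^2 ≤ (μ+1)^2 * ε :=
          mul_le_mul_of_nonneg_left h4 (sq_nonneg _)
        nlinarith [hB, h4', h5]
      have key1' : (μ+ε)^2 < ρ^2 * X * (σ/ε)^2 := by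
        rw [e1, lt_div_iff₀ (by positivity)]
        nlinarith [key1]
      have h6 : 0 ≤ 2*ρ*σ*(σ/ε) := by positivity
      have h7 : (0:ℝ) ≤ n := Nat.cast_nonneg n
      have hrw : g a = ρ^2 * X * (σ/ε)^2 + 2*ρ*σ*(σ/ε) + ((n:ℝ) - (μ+ε)^2) := by
        simp only [hgdef, haμ, hadef, add_sub_cancel_left]
      rw [hrw]
      linarith [key1', h6, h7]
    -- g b < 0
    have hgb : g b < 0 := by
      have hbμ : b - μ = 1 + C := by simp only [hbdef]; ring
      have ht0 : 0 ≤ σ/(1+C) := by positivity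
      have htσ : σ/(1+C) ≤ σ := by
        apply div_le_self hσ.le; linarith
      have h8 : ρ^2 * X * ((σ/(1+C))^2) ≤ ρ^2 * X * (σ^2) :=
        mul_le_mul_of_nonneg_left (pow_le_pow_left₀ ht0 htσ 2) (by positivity)
      have h9 : (2*ρ*σ) * (σ/(1+C)) ≤ (2*ρ*σ) * σ :=
        mul_le_mul_of_nonneg_left htσ (by positivity)
      have hb1 : 1 ≤ b := by simp only [hbdef]; linarith
      have hbC : C < b := by simp only [hbdef]; linarith
      have h10 : C < b^2 := by nlinarith
      have hrw : g b = ρ^2 * X * ((σ/(1+C))^2) + (2*ρ*σ)*(σ/(1+C)) + ((n:ℝ) - b^2) := by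
        simp only [hgdef, hbμ]
      rw [hrw]
      simp only [hCdef] at h10
      nlinarith [h8, h9, h10]
    -- IVT
    have hcont : ContinuousOn g (Set.Icc a b) := by
      have hne : ∀ lam ∈ Set.Icc a b, lam - μ ≠ 0 := by
        intro lam hlam
        have h := hlam.1
        have : μ < lam := lt_of_lt_of_le hμa h
        linarith
      have ht : ContinuousOn (fun lam : ℝ => σ/(lam - μ)) (Set.Icc a b) :=
        ContinuousOn.div continuousOn_const
          ((by continuity : Continuous fun lam : ℝ => lam - μ).continuousOn) hne
      exact (((continuousOn_const.mul (ht.pow 2)).add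
        (continuousOn_const.mul ht)).add
          ((by continuity : Continuous fun lam : ℝ => (n:ℝ) - lam^2).continuousOn))
    have h0mem : (0:ℝ) ∈ Set.Icc (g b) (g a) := ⟨hgb.le, hga.le⟩
    obtain ⟨c, hc, hgc⟩ := intermediate_value_Icc' hab hcont h0mem
    have hμc : μ < c := lt_of_lt_of_le hμa hc.1
    have hc0 : 0 < c := lt_trans hμ hμc
    have hcμ : c - μ ≠ 0 := by linarith
    have hcne : c ≠ 0 := ne_of_gt hc0
    set s : ℝ := -σ/(c - μ) with hsdef
    refine ⟨c, fun i => (ρ * s * x i - 1)/c, ?_, ?_, ?_⟩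
    · exact hμc
    · show ∑ i, ((ρ * s * x i - 1)/c)^2 = 1
      have hnum : ∑ i, ((ρ*s*x i - 1)^2) = ρ^2*s^2*X - 2*ρ*s*σ + n := by
        have e : ∀ i, (ρ*s*x i - 1)^2
            = ρ^2*s^2*((x i)^2) - 2*ρ*s*(x i) + 1 := fun i => by ring
        rw [Finset.sum_congr rfl fun i _ => e i, Finset.sum_add_distrib,
          Finset.sum_sub_distrib, ← Finset.mul_sum, ← Finset.mul_sum,
          Finset.sum_const]
        simp [Finset.card_univ]
        rfl
      have hσs : σ/(c-μ) = -s := by rw [hsdef]; ring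
      simp only [hgdef] at hgc
      rw [hσs] at hgc
      have hc2 : ρ^2*s^2*X - 2*ρ*s*σ + n = c^2 := by linear_combination hgc
      have hrw : ∑ i, ((ρ * s * x i - 1)/c)^2 = (∑ i, (ρ*s*x i - 1)^2)/c^2 := by
        rw [Finset.sum_div]
        exact Finset.sum_congr rfl fun i _ => div_pow _ _ _
      rw [hrw, hnum, hc2, div_self (by positivity)]
    · intro i
      show c * ((ρ * s * x i - 1)/c)
          - ρ * (∑ j, x j * ((ρ * s * x j - 1)/c)) * x i = -1
      have hS : ∑ j, x j * ((ρ * s * x j - 1)/c) = s := by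
        have e : ∀ j, x j * ((ρ * s * x j - 1)/c)
            = (ρ*s*((x j)^2) - x j)/c := fun j => by
          field_simp
        rw [Finset.sum_congr rfl fun j _ => e j, ← Finset.sum_div,
          Finset.sum_sub_distrib, ← Finset.mul_sum]
        rw [div_eq_iff hcne]
        have hsc : s * (c - μ) = -σ := by
          rw [hsdef]; field_simp
        rw [hμdef] at hsc
        ring_nf at hsc ⊢
        linarith [hsc]
      rw [hS]
      field_simp
      ring

theorem stmt_12 {n : ℕ} (ρ : ℝ) (hρ : 0 < ρ)
    (x : Fin n → ℝ) (hx : ∀ i, 0 ≤ x i)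
    (A : Matrix (Fin n) (Fin n) ℝ) (hA : ∀ i j, A i j = -(ρ * x i * x j))
    (ws : Fin n → ℝ) (hws : ∑ i, (ws i) ^ 2 = 1) :
    ((∀ w : Fin n → ℝ, (∑ i, (w i) ^ 2 = 1) →
        (1 / 2) * (∑ i, ∑ j, A i j * ws i * ws j) + (∑ i, ws i) ≤
          (1 / 2) * (∑ i, ∑ j, A i j * w i * w j) + (∑ i, w i)) ↔
      ∃ lam : ℝ, ρ * (∑ i, (x i) ^ 2) < lam ∧
        (A + lam • (1 : Matrix (Fin n) (Fin n) ℝ)).mulVec ws = fun _ => -1) ∧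
    (∀ lam₁ lam₂ : ℝ,
      ρ * (∑ i, (x i) ^ 2) < lam₁ →
      (A + lam₁ • (1 : Matrix (Fin n) (Fin n) ℝ)).mulVec ws = (fun _ => -1) →
      ρ * (∑ i, (x i) ^ 2) < lam₂ →
      (A + lam₂ • (1 : Matrix (Fin n) (Fin n) ℝ)).mulVec ws = (fun _ => -1) →
      lam₁ = lam₂) := by
  rcases Nat.eq_zero_or_pos n with hn | hn
  · exfalso; subst hn; simp at hws
  have quad := quad_eq ρ x A hA
  have mviff := fun (lam : ℝ) (w : Fin n → ℝ) => mulvec_iff ρ x A hA lam w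
  constructor
  · constructor
    · intro hmin
      obtain ⟨lam, w0, hlam, h0, hC⟩ := exists_pair hn ρ hρ x hx
      have hwseq : ws = w0 := by
        by_contra hne
        have hlt := key_strict ρ hρ x lam hlam w0 h0 hC ws hws hne
        have hle := hmin w0 h0
        rw [quad ws, quad w0] at hle
        linarith
      refine ⟨lam, hlam, (mviff lam ws).2 ?_⟩
      rw [hwseq]; exact hC
    · rintro ⟨lam, hlam, hmv⟩ w hw
      have hC := (mviff lam ws).1 hmv
      rw [quad ws, quad w]
      by_cases hne : w = ws
      · rw [hne]
      · exact le_of_lt (key_strict ρ hρ x lam hlam ws hws hC w hw hne)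
  · intro l1 l2 h1 hm1 h2 hm2
    have hC1 := (mviff l1 ws).1 hm1
    have hC2 := (mviff l2 ws).1 hm2
    obtain ⟨i, hi⟩ : ∃ i, ws i ≠ 0 := by
      by_contra h; push_neg at h; simp [h] at hws
    have e1 := hC1 i
    have e2 := hC2 i
    have : l1 * ws i = l2 * ws i := by linarith
    exact mul_right_cancel₀ hi this
end
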